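/- arXiv:1504.04616 — 5 statements merged into one kernel-verified Lean document; each statement's English description precedes it below -/
import Mathlib

section
/- For every n ≥ 1, let ψ be the bijection from balanced bipartite graphs with parts V_s = V_p = Fin n to digraphs on vertex set Fin n, defined by: ψ(G) = (Fin n, A) where (i,j) ∈ A if and only if (i_s, j_p) ∈ E(G). Then for every balanced bipartite graph G with at least one edge, r(G) < r(ψ(G)) ≤ 2·r(G) + 1, where the first readability is the bipartite readability of G and the second is the digraph readability of ψ(G). -/
namespace Readability

/-- `x` overlaps `y` by `i`: `1 ≤ i ≤ min |x| |y|` and the length-`i` suffix of `x`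
equals the length-`i` prefix of `y`. -/
def OverlapsBy {α : Type*} (x y : List α) (i : ℕ) : Prop :=
  1 ≤ i ∧ i ≤ min x.length y.length ∧ x.drop (x.length - i) = y.take i

/-- `ov x y`: the minimum `i` such that `x` overlaps `y` by `i`, or `0` if none exists. -/
noncomputable def ov {α : Type*} (x y : List α) : ℕ := sInf {i | OverlapsBy x y i}

/-- An overlap labeling of length `r` of the bipartite graph with parts `Vs`, `Vp` and
edge relation `E ⊆ Vs × Vp`. -/
def IsOverlapLabeling {α Vs Vp : Type*} (E : Vs → Vp → Prop) (r : ℕ)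
    (ls : Vs → List α) (lp : Vp → List α) : Prop :=
  (∀ u, (ls u).length = r) ∧ (∀ v, (lp v).length = r) ∧
    ∀ u v, E u v ↔ ∃ i, OverlapsBy (ls u) (lp v) i

/-- Bipartite readability: the least `r` admitting an overlap labeling of length `r`
(over the alphabet `ℕ`). -/
noncomputable def bReadability {Vs Vp : Type*} (E : Vs → Vp → Prop) : ℕ :=
  sInf {r | ∃ (ls : Vs → List ℕ) (lp : Vp → List ℕ), IsOverlapLabeling E r ls lp}

/-- An injective overlap labeling of length `r` of the digraph with arc relation `A`. -/
def IsInjOverlapLabeling {V : Type*} (A : V → V → Prop) (r : ℕ) (ℓ : V → List ℕ) : Prop :=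
  (∀ v, (ℓ v).length = r) ∧ Function.Injective ℓ ∧
    ∀ u v, A u v ↔ 0 < ov (ℓ u) (ℓ v) ∧ ov (ℓ u) (ℓ v) < r

/-- Digraph readability: the least `r` admitting an injective overlap labeling of length `r`. -/
noncomputable def dReadability {V : Type*} (A : V → V → Prop) : ℕ :=
  sInf {r | ∃ ℓ : V → List ℕ, IsInjOverlapLabeling A r ℓ}

/-- A decomposition of size `k`: a weight function on edges with values in `{1,…,k}`. -/
def IsDecomposition {Vs Vp : Type*} (E : Vs → Vp → Prop) (k : ℕ) (w : Vs → Vp → ℕ) : Prop :=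
  ∀ u v, E u v → 1 ≤ w u v ∧ w u v ≤ k

/-- An induced `P₄` with consecutive edges `(s1,p1), (s2,p1), (s2,p2)`. -/
def InducedP4 {Vs Vp : Type*} (E : Vs → Vp → Prop) (s1 s2 : Vs) (p1 p2 : Vp) : Prop :=
  s1 ≠ s2 ∧ p1 ≠ p2 ∧ E s1 p1 ∧ E s2 p1 ∧ E s2 p2 ∧ ¬ E s1 p2

/-- The `P₄`-rule: on each induced `P₄`, if the middle edge has maximum weight then its weight
is at least the sum of the weights of the two outer edges. -/
def SatisfiesP4Rule {Vs Vp : Type*} (E : Vs → Vp → Prop) (w : Vs → Vp → ℕ) : Prop :=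
  ∀ s1 s2 p1 p2, InducedP4 E s1 s2 p1 p2 →
    w s2 p1 = max (w s1 p1) (max (w s2 p1) (w s2 p2)) →
    w s1 p1 + w s2 p2 ≤ w s2 p1

/-- The strict `P₄`-rule: as the `P₄`-rule, with strict inequality. -/
def SatisfiesStrictP4Rule {Vs Vp : Type*} (E : Vs → Vp → Prop) (w : Vs → Vp → ℕ) : Prop :=
  ∀ s1 s2 p1 p2, InducedP4 E s1 s2 p1 p2 →
    w s2 p1 = max (w s1 p1) (max (w s2 p1) (w s2 p2)) →
    w s1 p1 + w s2 p2 < w s2 p1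

/-- `C₄`-freeness of a bipartite graph. -/
def C4Free {Vs Vp : Type*} (E : Vs → Vp → Prop) : Prop :=
  ∀ (s1 s2 : Vs) (p1 p2 : Vp), s1 ≠ s2 → p1 ≠ p2 →
    ¬ (E s1 p1 ∧ E s1 p2 ∧ E s2 p1 ∧ E s2 p2)

/-- The subgraph `G_i` of a decomposition: edges of weight exactly `i`. -/
def SubAt {Vs Vp : Type*} (E : Vs → Vp → Prop) (w : Vs → Vp → ℕ) (i : ℕ) :
    Vs → Vp → Prop :=
  fun u v => E u v ∧ w u v = i

/-- A bipartite edge relation is a disjoint union of bicliques iff it has no induced `P₄`,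
i.e. whenever `(s1,p1), (s2,p1), (s2,p2)` are edges, so is `(s1,p2)`. -/
def BicliqueUnion {Vs Vp : Type*} (H : Vs → Vp → Prop) : Prop :=
  ∀ s1 s2 p1 p2, H s1 p1 → H s2 p1 → H s2 p2 → H s1 p2

/-- The HUB-rule for a decomposition `w`:
(i) every level graph `G_i` is a disjoint union of bicliques, and
(ii) non-isolated twins in `G_i` (for `i ≥ 2`) are twins in every `G_j` with `1 ≤ j ≤ i-1`
(stated for both parts of the bipartition). -/
def SatisfiesHUBRule {Vs Vp : Type*} (E : Vs → Vp → Prop) (w : Vs → Vp → ℕ) : Prop :=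
  (∀ i, 1 ≤ i → BicliqueUnion (SubAt E w i)) ∧
  (∀ i, 2 ≤ i → ∀ u v : Vs, u ≠ v → (∃ p, SubAt E w i u p) →
      (∀ p, SubAt E w i u p ↔ SubAt E w i v p) →
      ∀ j, 1 ≤ j → j ≤ i - 1 → ∀ p, SubAt E w j u p ↔ SubAt E w j v p) ∧
  (∀ i, 2 ≤ i → ∀ u v : Vp, u ≠ v → (∃ s, SubAt E w i s u) →
      (∀ s, SubAt E w i s u ↔ SubAt E w i s v) →
      ∀ j, 1 ≤ j → j ≤ i - 1 → ∀ s, SubAt E w j s u ↔ SubAt E w j s v)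

/-- The HUB number: minimum size of a decomposition satisfying the HUB-rule. -/
noncomputable def hubNumber {Vs Vp : Type*} (E : Vs → Vp → Prop) : ℕ :=
  sInf {k | ∃ w, IsDecomposition E k w ∧ SatisfiesHUBRule E w}

/-- The underlying undirected simple graph on `Vs ⊕ Vp` of a bipartite graph. -/
def underlyingGraph {Vs Vp : Type*} (E : Vs → Vp → Prop) : SimpleGraph (Vs ⊕ Vp) where
  Adj x y := (∃ u v, x = Sum.inl u ∧ y = Sum.inr v ∧ E u v) ∨
    (∃ u v, x = Sum.inr v ∧ y = Sum.inl u ∧ E u v)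
  symm := by
    constructor
    rintro x y (⟨u, v, rfl, rfl, h⟩ | ⟨u, v, rfl, rfl, h⟩)
    · exact Or.inr ⟨u, v, rfl, rfl, h⟩
    · exact Or.inl ⟨u, v, rfl, rfl, h⟩
  loopless := by
    constructor
    rintro x (⟨u, v, h1, h2, -⟩ | ⟨u, v, h1, h2, -⟩) <;> subst h1 <;> simp_all

/-- The radius of a graph: the least `r` such that some vertex has eccentricity at most `r`
(for a finite connected graph this is `min_u max_v dist(u,v)`). -/
noncomputable def graphRadius {V : Type*} (G : SimpleGraph V) : ℕ :=
  sInf {r | ∃ u, ∀ v, G.dist u v ≤ r}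

/-- Distinctness of two vertices `u, v` of the same part (here the `Vs`-part, with
neighborhoods taken in `Vp`): `max(|N(u)∖N(v)|, |N(v)∖N(u)|)`. -/
noncomputable def DTpair {Vs Vp : Type*} (E : Vs → Vp → Prop) (u v : Vs) : ℕ :=
  max {p : Vp | E u p ∧ ¬ E v p}.ncard {p : Vp | E v p ∧ ¬ E u p}.ncard

/-- Distinctness of a bipartite graph: the minimum of `DT(u,v)` over pairs of distinct
vertices in the same part. -/
noncomputable def distinctness {Vs Vp : Type*} (E : Vs → Vp → Prop) : ℕ :=
  sInf ({d | ∃ u v : Vs, u ≠ v ∧ d = DTpair E u v} ∪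
        {d | ∃ u v : Vp, u ≠ v ∧ d = DTpair (fun p s => E s p) u v})

/-- A bipartite graph fails to be a matching iff some vertex has degree at least 2. -/
def NotMatching {Vs Vp : Type*} (E : Vs → Vp → Prop) : Prop :=
  (∃ u : Vs, ∃ p1 p2 : Vp, p1 ≠ p2 ∧ E u p1 ∧ E u p2) ∨
  (∃ p : Vp, ∃ u1 u2 : Vs, u1 ≠ u2 ∧ E u1 p ∧ E u2 p)

set_option linter.unusedVariables false

end Readability


namespace Readability

lemma drop_suffix_eq {α : Type*} {s x : List α} (h : s <:+ x) {i : ℕ} (hi : i ≤ s.length) :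
    x.drop (x.length - i) = s.drop (s.length - i) := by
  obtain ⟨a, rfl⟩ := h
  rw [List.length_append, show a.length + s.length - i = a.length + (s.length - i) by omega,
    List.drop_length_add_append]

lemma take_prefix_eq {α : Type*} {s x : List α} (h : s <+: x) {i : ℕ} (hi : i ≤ s.length) :
    x.take i = s.take i := by
  obtain ⟨a, rfl⟩ := h
  rw [List.take_append_of_le_length hi]

noncomputable def prevI (h : ℕ → ℕ) (t : ℕ) : Option ℕ :=
  ((Finset.range t).filter (fun s => h s = h t)).max

lemma prevI_lt {h : ℕ → ℕ} {t s : ℕ} (hs : prevI h t = some s) : s < t := by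
  have := Finset.mem_of_max hs
  simp [Finset.mem_filter] at this
  exact this.1

lemma prevI_eq {h : ℕ → ℕ} {t s : ℕ} (hs : prevI h t = some s) : h s = h t := by
  have := Finset.mem_of_max hs
  simp [Finset.mem_filter] at this
  exact this.2

lemma le_prevI {h : ℕ → ℕ} {t s : ℕ} (hst : s < t) (hh : h s = h t) :
    ∃ s', prevI h t = some s' ∧ s ≤ s' := by
  have hmem : s ∈ (Finset.range t).filter (fun s => h s = h t) := by
    simp [Finset.mem_filter, hst, hh]
  have hle := Finset.le_max hmem
  rcases hmax : ((Finset.range t).filter (fun s => h s = h t)).max with _ | s'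
  · rw [hmax] at hle; exact absurd hle (by change ¬ ((s : WithBot ℕ) ≤ ⊥); simp)
  · exact ⟨s', hmax, by rw [hmax] at hle; exact WithBot.coe_le_coe.mp hle⟩

noncomputable def pato (f g : ℕ → ℕ) (p : ℕ → List ℕ) : Option ℕ → List ℕ
  | some s => p s
  | none => []

noncomputable def pat (f g : ℕ → ℕ) (t : ℕ) : List ℕ :=
  (match h : prevI g t with
    | some s => pat f g s
    | none => []) ++ (t+1) :: (match h' : prevI f t with
    | some s => pat f g s
    | none => [])
  termination_by t
  decreasing_by
  · exact prevI_lt h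
  · exact prevI_lt h'

lemma pat_eq (f g : ℕ → ℕ) (t : ℕ) :
    pat f g t = pato f g (pat f g) (prevI g t) ++ (t+1) :: pato f g (pat f g) (prevI f t) := by
  rw [pat]
  rcases h : prevI g t with _ | s <;> rcases h' : prevI f t with _ | s' <;> simp [pato]

/-- letters of `pat t` lie in `[1, t+1]`. -/
lemma pat_letters (f g : ℕ → ℕ) : ∀ t, ∀ c ∈ pat f g t, 1 ≤ c ∧ c ≤ t + 1 := by
  intro t
  induction t using Nat.strong_induction_on with
  | _ t ih =>
    intro c hc
    rw [pat_eq] at hc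
    simp only [List.mem_append, List.mem_cons] at hc
    rcases hc with hc | hc | hc
    · rcases hg : prevI g t with _ | s
      · rw [hg] at hc; simp [pato] at hc
      · rw [hg] at hc
        have := ih s (prevI_lt hg) c hc
        have := prevI_lt hg
        omega
    · omega
    · rcases hf : prevI f t with _ | s
      · rw [hf] at hc; simp [pato] at hc
      · rw [hf] at hc
        have := ih s (prevI_lt hf) c hc
        have := prevI_lt hf
        omega

lemma pat_length_pos (f g : ℕ → ℕ) (t : ℕ) : 1 ≤ (pat f g t).length := by
  rw [pat_eq]; simp; omega

/-- source chain: if `s ≤ t` and same source, `pat s` is a suffix of `pat t`. -/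
lemma pat_suffix (f g : ℕ → ℕ) : ∀ t s, s ≤ t → f s = f t → pat f g s <:+ pat f g t := by
  intro t
  induction t using Nat.strong_induction_on with
  | _ t ih =>
    intro s hst hfs
    rcases eq_or_lt_of_le hst with rfl | hlt
    · exact List.suffix_refl _
    · obtain ⟨s', hps, hss'⟩ := le_prevI hlt hfs
      have h1 : pat f g s <:+ pat f g s' :=
        ih s' (prevI_lt hps) s hss' (hfs.trans (prevI_eq hps).symm)
      refine h1.trans ?_
      rw [pat_eq f g t, hps]
      exact ⟨pato f g (pat f g) (prevI g t) ++ [t+1], by simp [pato]⟩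

/-- sink chain: if `s ≤ t` and same sink, `pat s` is a prefix of `pat t`. -/
lemma pat_prefix (f g : ℕ → ℕ) : ∀ t s, s ≤ t → g s = g t → pat f g s <+: pat f g t := by
  intro t
  induction t using Nat.strong_induction_on with
  | _ t ih =>
    intro s hst hgs
    rcases eq_or_lt_of_le hst with rfl | hlt
    · exact List.prefix_refl _
    · obtain ⟨s', hps, hss'⟩ := le_prevI hlt hgs
      have h1 : pat f g s <+: pat f g s' :=
        ih s' (prevI_lt hps) s hss' (hgs.trans (prevI_eq hps).symm)
      refine h1.trans ?_
      rw [pat_eq f g t, hps]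
      exact ⟨(t+1) :: pato f g (pat f g) (prevI f t), by simp [pato]⟩

end Readability

namespace Readability
/-- Main lemma: any suffix-prefix match between patterns comes from an edge. -/
lemma pat_main (f g : ℕ → ℕ) : ∀ N a b, a + b = N → ∀ i, 1 ≤ i →
    i ≤ (pat f g a).length → i ≤ (pat f g b).length →
    (pat f g a).drop ((pat f g a).length - i) = (pat f g b).take i →
    ∃ t, t ≤ a ∧ t ≤ b ∧ f t = f a ∧ g t = g b := by
  intro N
  induction N using Nat.strong_induction_on with
  | _ N ih =>
    intro a b hab i hi1 hia hib hov
    by_cases hc1 : ∃ a', prevI f a = some a' ∧ i ≤ (pat f g a').length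
    · obtain ⟨a', hpa, hia'⟩ := hc1
      have hsuf : pat f g a' <:+ pat f g a := by
        rw [pat_eq f g a, hpa]
        exact ⟨pato f g (pat f g) (prevI g a) ++ [a+1], by simp [pato]⟩
      have hov' : (pat f g a').drop ((pat f g a').length - i) = (pat f g b).take i := by
        rw [← drop_suffix_eq hsuf hia']; exact hov
      have hlt := prevI_lt hpa
      obtain ⟨t, ht1, ht2, ht3, ht4⟩ :=
        ih (a' + b) (by omega) a' b rfl i hi1 hia' hib hov'
      exact ⟨t, by omega, ht2, ht3.trans (prevI_eq hpa), ht4⟩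
    · by_cases hc2 : ∃ b', prevI g b = some b' ∧ i ≤ (pat f g b').length
      · obtain ⟨b', hpb, hib'⟩ := hc2
        have hpre : pat f g b' <+: pat f g b := by
          rw [pat_eq f g b, hpb]
          exact ⟨(b+1) :: pato f g (pat f g) (prevI f b), by simp [pato]⟩
        have hov' : (pat f g a).drop ((pat f g a).length - i) = (pat f g b').take i := by
          rw [← take_prefix_eq hpre hib']; exact hov
        have hlt := prevI_lt hpb
        obtain ⟨t, ht1, ht2, ht3, ht4⟩ :=
          ih (a + b') (by omega) a b' rfl i hi1 hia hib' hov'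
        exact ⟨t, ht1, by omega, ht3, ht4.trans (prevI_eq hpb)⟩
      · -- boundary case: markers meet, so a = b
        set XA := pato f g (pat f g) (prevI g a) with hXA
        set YA := pato f g (pat f g) (prevI f a) with hYA
        set XB := pato f g (pat f g) (prevI g b) with hXB
        set YB := pato f g (pat f g) (prevI f b) with hYB
        have hPa : pat f g a = XA ++ (a+1) :: YA := pat_eq f g a
        have hPb : pat f g b = XB ++ (b+1) :: YB := pat_eq f g b
        have hYAi : YA.length < i := by
          rcases hpa : prevI f a with _ | a'
          · simp [hYA, hpa, pato]; omega
          · have : ¬ i ≤ (pat f g a').length := fun h => hc1 ⟨a', hpa, h⟩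
            simp [hYA, hpa, pato]; omega
        have hXBi : XB.length < i := by
          rcases hpb : prevI g b with _ | b'
          · simp [hXB, hpb, pato]; omega
          · have : ¬ i ≤ (pat f g b').length := fun h => hc2 ⟨b', hpb, h⟩
            simp [hXB, hpb, pato]; omega
        have hlenA : (pat f g a).length = XA.length + YA.length + 1 := by
          rw [hPa]; simp; omega
        have hmem1 : (a+1) ∈ (pat f g a).drop ((pat f g a).length - i) := by
          rw [hPa, List.drop_append_of_le_length (by rw [← hPa]; omega)]
          simp
        have hmem2 : (b+1) ∈ (pat f g b).take i := by
          have h1 : i - XB.length = (i - XB.length - 1) + 1 := by omega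
          rw [hPb, List.take_append, h1, List.take_succ_cons]
          simp
        have hab1 : a + 1 ≤ b + 1 := by
          rw [hov] at hmem1
          exact (pat_letters f g b _ (List.mem_of_mem_take hmem1)).2
        have hab2 : b + 1 ≤ a + 1 := by
          rw [← hov] at hmem2
          exact (pat_letters f g a _ (List.mem_of_mem_drop hmem2)).2
        have : a = b := by omega
        subst this
        exact ⟨a, le_refl _, le_refl _, rfl, rfl⟩
end Readability

namespace Readability

lemma pat_len_le (f g : ℕ → ℕ) : ∀ t, (pat f g t).length ≤ 2^(t+1) - 1 := by
  intro t
  induction t using Nat.strong_induction_on with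
  | _ t ih =>
    rw [pat_eq]
    have hX : (pato f g (pat f g) (prevI g t)).length ≤ 2^t - 1 := by
      rcases h : prevI g t with _ | s
      · simp [pato]
      · have h1 := ih s (prevI_lt h)
        have h2 : 2^(s+1) ≤ 2^t := Nat.pow_le_pow_right (by norm_num) (prevI_lt h)
        simpa [pato] using h1.trans (by omega)
    have hY : (pato f g (pat f g) (prevI f t)).length ≤ 2^t - 1 := by
      rcases h : prevI f t with _ | s
      · simp [pato]
      · have h1 := ih s (prevI_lt h)
        have h2 : 2^(s+1) ≤ 2^t := Nat.pow_le_pow_right (by norm_num) (prevI_lt h)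
        simpa [pato] using h1.trans (by omega)
    have hp : 1 ≤ 2^t := Nat.one_le_two_pow
    have hp2 : 2^(t+1) = 2 * 2^t := by ring
    simp only [List.length_append, List.length_cons]
    omega

lemma max_filter_spec {P : ℕ → Prop} [DecidablePred P] {m a : ℕ}
    (h : ((Finset.range m).filter P).max = some a) : a < m ∧ P a := by
  have := Finset.mem_of_max h
  simpa [Finset.mem_filter] using this

lemma le_max_filter {P : ℕ → Prop} [DecidablePred P] {m s : ℕ} (hs : s < m) (hP : P s) :
    ∃ a, ((Finset.range m).filter P).max = some a ∧ s ≤ a := by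
  have hmem : s ∈ (Finset.range m).filter P := by simp [Finset.mem_filter, hs, hP]
  have hle := Finset.le_max hmem
  rcases hmax : ((Finset.range m).filter P).max with _ | a
  · rw [hmax] at hle; exact absurd hle (by change ¬ ((s : WithBot ℕ) ≤ ⊥); simp)
  · refine ⟨a, rfl, ?_⟩; rw [hmax] at hle; exact WithBot.coe_le_coe.mp hle

end Readability

namespace Readability
section Construction

variable (n : ℕ) (E : Fin n → Fin n → Prop) (hn : 0 < n)

noncomputable def eL : List (Fin n × Fin n) :=
  letI : DecidablePred (fun p : Fin n × Fin n => E p.1 p.2) := Classical.decPred _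
  (Finset.univ.filter fun p => E p.1 p.2).toList

lemma mem_eL (p : Fin n × Fin n) : p ∈ eL n E ↔ E p.1 p.2 := by
  unfold eL
  simp [Finset.mem_filter]

noncomputable def eM : ℕ := (eL n E).length

noncomputable def dflt : Fin n × Fin n := (⟨0, hn⟩, ⟨0, hn⟩)

noncomputable def ef : ℕ → ℕ := fun t => (((eL n E).getD t (dflt n hn)).1 : ℕ)
noncomputable def eg : ℕ → ℕ := fun t => (((eL n E).getD t (dflt n hn)).2 : ℕ)

lemma eEdge {t : ℕ} (ht : t < eM n E) :
    E ((eL n E).getD t (dflt n hn)).1 ((eL n E).getD t (dflt n hn)).2 := by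
  rw [List.getD_eq_getElem (eL n E) _ ht]
  rw [← mem_eL n E]
  exact List.getElem_mem ht

lemma eSur {u v : Fin n} (h : E u v) :
    ∃ t, t < eM n E ∧ (eL n E).getD t (dflt n hn) = (u, v) := by
  have hm : (u, v) ∈ eL n E := (mem_eL n E (u, v)).mpr h
  obtain ⟨t, ht, hget⟩ := List.mem_iff_getElem.mp hm
  exact ⟨t, ht, by rw [List.getD_eq_getElem (eL n E) _ ht]; exact hget⟩

noncomputable def eR : ℕ := 2 ^ eM n E

lemma patlen_lt {a : ℕ} (ha : a < eM n E) :
    (pat (ef n E hn) (eg n E hn) a).length < eR n E := by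
  have h1 := pat_len_le (ef n E hn) (eg n E hn) a
  have h2 : 2 ^ (a + 1) ≤ 2 ^ eM n E := Nat.pow_le_pow_right (by norm_num) (by omega)
  have h3 : 1 ≤ 2 ^ (a+1) := Nat.one_le_two_pow
  unfold eR
  omega

noncomputable def aIdx (u : Fin n) : Option ℕ :=
  ((Finset.range (eM n E)).filter fun t => ef n E hn t = u.val).max

noncomputable def bIdx (v : Fin n) : Option ℕ :=
  ((Finset.range (eM n E)).filter fun t => eg n E hn t = v.val).max

noncomputable def lsF (u : Fin n) : List ℕ :=
  match aIdx n E hn u with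
  | some a => List.replicate (eR n E - (pat (ef n E hn) (eg n E hn) a).length)
      (eM n E + 2 + u.val) ++ pat (ef n E hn) (eg n E hn) a
  | none => List.replicate (eR n E) (eM n E + 2 + u.val)

noncomputable def lpF (v : Fin n) : List ℕ :=
  match bIdx n E hn v with
  | some b => pat (ef n E hn) (eg n E hn) b ++
      List.replicate (eR n E - (pat (ef n E hn) (eg n E hn) b).length) (eM n E + 2 + n + v.val)
  | none => List.replicate (eR n E) (eM n E + 2 + n + v.val)

lemma lsF_length (u : Fin n) : (lsF n E hn u).length = eR n E := by
  unfold lsF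
  rcases h : aIdx n E hn u with _ | a
  · simp
  · have ha := (max_filter_spec h).1
    have := patlen_lt n E hn ha
    simp
    omega

lemma lpF_length (v : Fin n) : (lpF n E hn v).length = eR n E := by
  unfold lpF
  rcases h : bIdx n E hn v with _ | b
  · simp
  · have hb := (max_filter_spec h).1
    have := patlen_lt n E hn hb
    simp
    omega

lemma mem_lsF {u : Fin n} {c : ℕ} (hc : c ∈ lsF n E hn u) :
    c ≤ eM n E ∨ c = eM n E + 2 + u.val := by
  unfold lsF at hc
  rcases h : aIdx n E hn u with _ | a <;> rw [h] at hc
  · right; exact List.eq_of_mem_replicate hc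
  · rcases List.mem_append.mp hc with h1 | h1
    · right; exact List.eq_of_mem_replicate h1
    · left
      have := (pat_letters _ _ a c h1).2
      have := (max_filter_spec h).1
      omega

lemma mem_lpF {v : Fin n} {c : ℕ} (hc : c ∈ lpF n E hn v) :
    c ≤ eM n E ∨ c = eM n E + 2 + n + v.val := by
  unfold lpF at hc
  rcases h : bIdx n E hn v with _ | b <;> rw [h] at hc
  · right; exact List.eq_of_mem_replicate hc
  · rcases List.mem_append.mp hc with h1 | h1
    · left
      have := (pat_letters _ _ b c h1).2
      have := (max_filter_spec h).1
      omega
    · right; exact List.eq_of_mem_replicate h1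

end Construction
end Readability

namespace Readability
section Correct

variable (n : ℕ) (E : Fin n → Fin n → Prop) (hn : 0 < n)

lemma labeling_spec : IsOverlapLabeling E (eR n E) (lsF n E hn) (lpF n E hn) := by
  set f := ef n E hn with hf
  set g := eg n E hn with hg
  refine ⟨lsF_length n E hn, lpF_length n E hn, fun u v => ⟨?_, ?_⟩⟩
  · intro h
    obtain ⟨t, htm, hget⟩ := eSur n E hn h
    have hft : f t = u.val := by rw [hf]; unfold ef; rw [hget]
    have hgt : g t = v.val := by rw [hg]; unfold eg; rw [hget]
    obtain ⟨a, ha, hta⟩ := le_max_filter (P := fun t' => f t' = u.val) htm hft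
    obtain ⟨b, hb, htb⟩ := le_max_filter (P := fun t' => g t' = v.val) htm hgt
    have ha' : aIdx n E hn u = some a := ha
    have hb' : bIdx n E hn v = some b := hb
    have haS := max_filter_spec ha'
    have hbS := max_filter_spec hb'
    rw [← hf] at haS
    rw [← hg] at hbS
    have hsuf : pat f g t <:+ pat f g a := pat_suffix f g a t hta (by rw [hft, haS.2])
    have hpre : pat f g t <+: pat f g b := pat_prefix f g b t htb (by rw [hgt, hbS.2])
    have hlsu : lsF n E hn u =
        List.replicate (eR n E - (pat f g a).length) (eM n E + 2 + u.val) ++ pat f g a := by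
      simp only [lsF, ha']; rfl
    have hlpv : lpF n E hn v =
        pat f g b ++ List.replicate (eR n E - (pat f g b).length) (eM n E + 2 + n + v.val) := by
      simp only [lpF, hb']; rfl
    refine ⟨(pat f g t).length, pat_length_pos f g t, ?_, ?_⟩
    · rw [lsF_length, lpF_length]
      have h1 := hsuf.length_le
      have h2 := patlen_lt n E hn haS.1
      rw [← hf, ← hg] at h2
      simp only [min_self]
      omega
    · have hd : (lsF n E hn u).drop ((lsF n E hn u).length - (pat f g t).length)
          = (pat f g a).drop ((pat f g a).length - (pat f g t).length) :=
        drop_suffix_eq ⟨_, hlsu.symm⟩ hsuf.length_le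
      rw [hd, drop_suffix_eq hsuf le_rfl, Nat.sub_self, List.drop_zero,
        take_prefix_eq ⟨_, hlpv.symm⟩ hpre.length_le, take_prefix_eq hpre le_rfl,
        List.take_length]
  · rintro ⟨i, hi1, hi2, hov⟩
    have hiR : i ≤ eR n E := by
      rw [lsF_length] at hi2
      omega
    have hju_lp : (eM n E + 2 + u.val) ∉ lpF n E hn v := by
      intro hc
      rcases mem_lpF n E hn hc with h1 | h1
      · omega
      · have := u.isLt; omega
    have hjp_ls : (eM n E + 2 + n + v.val) ∉ lsF n E hn u := by
      intro hc
      rcases mem_lsF n E hn hc with h1 | h1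
      · omega
      · have := v.isLt; omega
    rcases ha : aIdx n E hn u with _ | a
    · exfalso
      have hlsu : lsF n E hn u = List.replicate (eR n E) (eM n E + 2 + u.val) := by
        simp only [lsF, ha]
      rw [hlsu] at hov
      simp only [List.length_replicate, List.drop_replicate] at hov
      apply hju_lp
      apply List.mem_of_mem_take (i := i)
      rw [← hov]
      exact List.mem_replicate.mpr ⟨by omega, rfl⟩
    · have haS := max_filter_spec ha
      rw [← hf] at haS
      have hlsu : lsF n E hn u =
          List.replicate (eR n E - (pat f g a).length) (eM n E + 2 + u.val) ++ pat f g a := by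
        simp only [lsF, ha]; rfl
      have hpa := patlen_lt n E hn haS.1
      rw [← hf, ← hg] at hpa
      by_cases hia : i ≤ (pat f g a).length
      · rcases hb : bIdx n E hn v with _ | b
        · exfalso
          have hlpv : lpF n E hn v = List.replicate (eR n E) (eM n E + 2 + n + v.val) := by
            simp only [lpF, hb]
          rw [hlpv, List.take_replicate] at hov
          apply hjp_ls
          apply List.mem_of_mem_drop (i := (lsF n E hn u).length - i)
          rw [hov]
          exact List.mem_replicate.mpr ⟨by omega, rfl⟩
        · have hbS := max_filter_spec hb
          rw [← hg] at hbS
          have hlpv : lpF n E hn v = pat f g b ++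
              List.replicate (eR n E - (pat f g b).length) (eM n E + 2 + n + v.val) := by
            simp only [lpF, hb]; rfl
          have hpb := patlen_lt n E hn hbS.1
          rw [← hf, ← hg] at hpb
          by_cases hib : i ≤ (pat f g b).length
          · have hd : (lsF n E hn u).drop ((lsF n E hn u).length - i)
                = (pat f g a).drop ((pat f g a).length - i) :=
              drop_suffix_eq ⟨_, hlsu.symm⟩ hia
            have ht : (lpF n E hn v).take i = (pat f g b).take i :=
              take_prefix_eq ⟨_, hlpv.symm⟩ hib
            rw [hd, ht] at hov
            obtain ⟨t, hta, htb, htf, htg⟩ := pat_main f g (a + b) a b rfl i hi1 hia hib hov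
            have htm : t < eM n E := by omega
            have hE := eEdge n E hn htm
            have h1 : ((eL n E).getD t (dflt n hn)).1 = u := by
              apply Fin.val_injective
              rw [show (((eL n E).getD t (dflt n hn)).1 : ℕ) = f t from rfl, htf, haS.2]
            have h2 : ((eL n E).getD t (dflt n hn)).2 = v := by
              apply Fin.val_injective
              rw [show (((eL n E).getD t (dflt n hn)).2 : ℕ) = g t from rfl, htg, hbS.2]
            rwa [h1, h2] at hE
          · exfalso
            apply hjp_ls
            apply List.mem_of_mem_drop (i := (lsF n E hn u).length - i)
            rw [hov, hlpv, List.take_append, List.take_replicate]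
            refine List.mem_append.mpr (Or.inr ?_)
            exact List.mem_replicate.mpr ⟨by omega, rfl⟩
      · exfalso
        apply hju_lp
        apply List.mem_of_mem_take (i := i)
        rw [← hov, hlsu]
        have hlen : (List.replicate (eR n E - (pat f g a).length) (eM n E + 2 + u.val)
            ++ pat f g a).length = eR n E := by simp; omega
        rw [hlen, List.drop_append_of_le_length (by simp; omega), List.drop_replicate]
        refine List.mem_append.mpr (Or.inl ?_)
        exact List.mem_replicate.mpr ⟨by omega, rfl⟩

lemma exists_bip_labeling (hn : 0 < n) :
    ∃ (r : ℕ) (ls lp : Fin n → List ℕ), 1 ≤ r ∧ IsOverlapLabeling E r ls lp :=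
  ⟨eR n E, lsF n E hn, lpF n E hn, Nat.one_le_two_pow, labeling_spec n E hn⟩

end Correct
end Readability

namespace Readability

lemma getElem?_mem' {l : List ℕ} {a c : ℕ} (h : l[a]? = some c) : c ∈ l := by
  have := List.getElem?_eq_some_iff.mp h
  obtain ⟨h1, h2⟩ := this
  exact h2 ▸ List.getElem_mem h1

/-- from a bipartite overlap labeling of length `r`, an injective digraph labeling of
length `2r+1`. -/
lemma dig_of_bip {n : ℕ} {E : Fin n → Fin n → Prop} {r : ℕ} {ls lp : Fin n → List ℕ}
    (hL : IsOverlapLabeling E r ls lp) :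
    ∃ ℓ : Fin n → List ℕ, IsInjOverlapLabeling E (2 * r + 1) ℓ := by
  classical
  obtain ⟨hls, hlp, hiff⟩ := hL
  set S : Finset ℕ := Finset.univ.sup (fun w : Fin n => (ls w).toFinset ∪ (lp w).toFinset)
    with hS
  set K : ℕ := S.sup id + 1 with hK
  have hmemS : ∀ c, c ∈ S → c < K := by
    intro c hc
    have : id c ≤ S.sup id := Finset.le_sup hc
    simp at this; omega
  have hlsK : ∀ w : Fin n, ∀ c ∈ ls w, c < K := by
    intro w c hc
    exact hmemS c (Finset.le_sup (f := fun w : Fin n => (ls w).toFinset ∪ (lp w).toFinset)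
      (Finset.mem_univ w) (by simp [hc]))
  have hlpK : ∀ w : Fin n, ∀ c ∈ lp w, c < K := by
    intro w c hc
    exact hmemS c (Finset.le_sup (f := fun w : Fin n => (ls w).toFinset ∪ (lp w).toFinset)
      (Finset.mem_univ w) (by simp [hc]))
  refine ⟨fun w => lp w ++ (K + w.val) :: ls w, ?_, ?_, ?_⟩
  · intro w; simp [hls w, hlp w]; omega
  · intro u v h
    have h1 : (lp u ++ (K + u.val) :: ls u)[r]? = some (K + u.val) := by
      rw [List.getElem?_append_right (by rw [hlp u])]
      rw [hlp u]; simp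
    have h2 : (lp v ++ (K + v.val) :: ls v)[r]? = some (K + v.val) := by
      rw [List.getElem?_append_right (by rw [hlp v])]
      rw [hlp v]; simp
    have h' : lp u ++ (K + u.val) :: ls u = lp v ++ (K + v.val) :: ls v := h
    rw [h'] at h1
    rw [h2] at h1
    have h'' := Option.some.inj h1
    have : u.val = v.val := by omega
    exact Fin.val_injective this
  · intro u v
    show E u v ↔ 0 < ov (lp u ++ (K + u.val) :: ls u) (lp v ++ (K + v.val) :: ls v)
      ∧ ov (lp u ++ (K + u.val) :: ls u) (lp v ++ (K + v.val) :: ls v) < 2 * r + 1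
    set x := lp u ++ (K + u.val) :: ls u with hx
    set y := lp v ++ (K + v.val) :: ls v with hy
    have hxlen : x.length = 2 * r + 1 := by rw [hx]; simp [hls u, hlp u]; omega
    have hylen : y.length = 2 * r + 1 := by rw [hy]; simp [hls v, hlp v]; omega
    have hxsuf : ls u <:+ x := ⟨lp u ++ [K + u.val], by simp [hx]⟩
    have hypre : lp v <+: y := ⟨(K + v.val) :: ls v, by simp [hy]⟩
    -- characterization of small overlaps
    have hsmall : ∀ i, i ≤ r → (OverlapsBy x y i ↔ OverlapsBy (ls u) (lp v) i) := by
      intro i hir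
      have hdr : x.drop (x.length - i) = (ls u).drop ((ls u).length - i) :=
        drop_suffix_eq hxsuf (by rw [hls u]; exact hir)
      have htk : y.take i = (lp v).take i :=
        take_prefix_eq hypre (by rw [hlp v]; exact hir)
      constructor
      · rintro ⟨a1, a2, a3⟩
        exact ⟨a1, by rw [hls u, hlp v]; simp; omega, by rw [← hdr, ← htk]; exact a3⟩
      · rintro ⟨a1, a2, a3⟩
        exact ⟨a1, by rw [hxlen, hylen]; omega, by rw [hdr, htk]; exact a3⟩
    -- middle overlaps impossible
    have hmid : ∀ i, r + 1 ≤ i → i ≤ 2 * r → ¬ OverlapsBy x y i := by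
      rintro i hir1 hir2 ⟨a1, a2, a3⟩
      rw [hxlen] at a3
      have e1 : (x.drop (2 * r + 1 - i))[i - r - 1]? = some (K + u.val) := by
        rw [List.getElem?_drop]
        rw [show 2 * r + 1 - i + (i - r - 1) = r by omega]
        rw [hx, List.getElem?_append_right (by rw [hlp u])]
        rw [hlp u]; simp
      have hlt2 : i - r - 1 < (lp v).length := by rw [hlp v]; omega
      have e2 : (y.take i)[i - r - 1]? = (lp v)[i - r - 1]? := by
        rw [List.getElem?_take, if_pos (show i - r - 1 < i by omega), hy,
          List.getElem?_append, if_pos hlt2]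
      rw [a3, e2, List.getElem?_eq_getElem hlt2] at e1
      have hcK := hlpK v _ (List.getElem_mem hlt2)
      have : (lp v)[i - r - 1] = K + u.val := by injection e1
      omega
    -- full overlap iff equal
    have hfull : OverlapsBy x y (2 * r + 1) ↔ x = y := by
      constructor
      · rintro ⟨a1, a2, a3⟩
        rw [hxlen, Nat.sub_self, List.drop_zero, List.take_of_length_le (by omega)] at a3
        exact a3
      · intro hxy
        refine ⟨by omega, by rw [hxlen, hylen]; omega, ?_⟩
        rw [hxlen, Nat.sub_self, List.drop_zero, List.take_of_length_le (by omega), hxy]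
    constructor
    · intro h
      obtain ⟨i, hi⟩ := (hiff u v).mp h
      have hir : i ≤ r := by
        have := hi.2.1
        rw [hls u, hlp v] at this
        omega
      have hmem : i ∈ {j | OverlapsBy x y j} := (hsmall i hir).mpr hi
      have hle : ov x y ≤ i := Nat.sInf_le hmem
      have hou : ov x y ∈ {j | OverlapsBy x y j} := Nat.sInf_mem ⟨i, hmem⟩
      have : 1 ≤ ov x y := hou.1
      constructor
      · omega
      · omega
    · rintro ⟨h1, h2⟩
      have hne : {j | OverlapsBy x y j}.Nonempty := Nat.nonempty_of_pos_sInf h1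
      have hou : ov x y ∈ {j | OverlapsBy x y j} := Nat.sInf_mem hne
      have hir : ov x y ≤ r := by
        by_contra hcon
        exact hmid (ov x y) (by omega) (by omega) hou
      exact (hiff u v).mpr ⟨ov x y, (hsmall _ hir).mp hou⟩

/-- from an injective digraph overlap labeling of length `d ≥ 1`, a bipartite overlap
labeling of length `d - 1`. -/
lemma bip_of_dig {n : ℕ} {A : Fin n → Fin n → Prop} {d : ℕ} {ℓ : Fin n → List ℕ}
    (hL : IsInjOverlapLabeling A d ℓ) (hd : 1 ≤ d) :
    ∃ ls lp : Fin n → List ℕ, IsOverlapLabeling A (d - 1) ls lp := by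
  obtain ⟨hlen, hinj, hiff⟩ := hL
  refine ⟨fun u => (ℓ u).drop 1, fun v => (ℓ v).take (d - 1), ?_, ?_, ?_⟩
  · intro u; simp [hlen u]
  · intro v; simp [hlen v]
  · intro u v
    have hlsu : ((ℓ u).drop 1).length = d - 1 := by simp [hlen u]
    have hlpv : ((ℓ v).take (d - 1)).length = d - 1 := by simp [hlen v]
    have hconv : ∀ i, 1 ≤ i → i ≤ d - 1 →
        (OverlapsBy (ℓ u) (ℓ v) i ↔ OverlapsBy ((ℓ u).drop 1) ((ℓ v).take (d - 1)) i) := by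
      intro i hi1 hi2
      have hdr : (ℓ u).drop ((ℓ u).length - i)
          = ((ℓ u).drop 1).drop (((ℓ u).drop 1).length - i) :=
        drop_suffix_eq (List.drop_suffix 1 (ℓ u)) (by rw [hlsu]; omega)
      have htk : (ℓ v).take i = ((ℓ v).take (d - 1)).take i :=
        take_prefix_eq (List.take_prefix (d - 1) (ℓ v)) (by rw [hlpv]; omega)
      constructor
      · rintro ⟨a1, a2, a3⟩
        exact ⟨a1, by rw [hlsu, hlpv]; omega, by rw [← hdr, ← htk]; exact a3⟩
      · rintro ⟨a1, a2, a3⟩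
        exact ⟨a1, by rw [hlen u, hlen v]; omega, by rw [hdr, htk]; exact a3⟩
    constructor
    · intro h
      obtain ⟨h1, h2⟩ := (hiff u v).mp h
      have hne : {j | OverlapsBy (ℓ u) (ℓ v) j}.Nonempty := Nat.nonempty_of_pos_sInf h1
      have hou : ov (ℓ u) (ℓ v) ∈ {j | OverlapsBy (ℓ u) (ℓ v) j} := Nat.sInf_mem hne
      exact ⟨ov (ℓ u) (ℓ v), (hconv _ h1 (by omega)).mp hou⟩
    · rintro ⟨i, hi⟩
      have hi1 : 1 ≤ i := hi.1
      have hi2 : i ≤ d - 1 := by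
        have := hi.2.1
        rw [hlsu, hlpv] at this
        omega
      have hmem : i ∈ {j | OverlapsBy (ℓ u) (ℓ v) j} := (hconv i hi1 hi2).mpr hi
      have hle : ov (ℓ u) (ℓ v) ≤ i := Nat.sInf_le hmem
      have hou : ov (ℓ u) (ℓ v) ∈ {j | OverlapsBy (ℓ u) (ℓ v) j} := Nat.sInf_mem ⟨i, hmem⟩
      exact (hiff u v).mpr ⟨by have := hou.1; omega, by omega⟩

end Readability

namespace Readability

/-- For every `n ≥ 1` and every balanced bipartite graph `G` on parts `Fin n`
with at least one edge, `r(G) < r(ψ(G)) ≤ 2·r(G) + 1`, where `ψ(G)` is the digraph on `Fin n`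
with arcs `(i,j)` exactly when `(i_s, j_p)` is an edge of `G`. -/
theorem statement0 (n : ℕ) (hn : 1 ≤ n) (E : Fin n → Fin n → Prop) (hE : ∃ u v, E u v) :
    bReadability E < dReadability E ∧ dReadability E ≤ 2 * bReadability E + 1 := by
  obtain ⟨u0, v0, hE0⟩ := hE
  obtain ⟨r0, ls0, lp0, hr0, hL0⟩ := exists_bip_labeling n E hn
  have hSne : {r | ∃ ls lp : Fin n → List ℕ, IsOverlapLabeling E r ls lp}.Nonempty :=
    ⟨r0, ls0, lp0, hL0⟩
  have hbmem : ∃ ls lp : Fin n → List ℕ, IsOverlapLabeling E (bReadability E) ls lp :=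
    Nat.sInf_mem hSne
  obtain ⟨ls, lp, hL⟩ := hbmem
  obtain ⟨ℓ, hD⟩ := dig_of_bip hL
  have hdle : dReadability E ≤ 2 * bReadability E + 1 := Nat.sInf_le ⟨ℓ, hD⟩
  have hTne : {r | ∃ ℓ : Fin n → List ℕ, IsInjOverlapLabeling E r ℓ}.Nonempty :=
    ⟨2 * bReadability E + 1, ℓ, hD⟩
  have hdmem : ∃ ℓd : Fin n → List ℕ, IsInjOverlapLabeling E (dReadability E) ℓd :=
    Nat.sInf_mem hTne
  obtain ⟨ℓd, hDd⟩ := hdmem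
  have hd1 : 1 ≤ dReadability E := by
    obtain ⟨h1, h2⟩ := (hDd.2.2 u0 v0).mp hE0
    omega
  obtain ⟨ls', lp', hL'⟩ := bip_of_dig hDd hd1
  have hble : bReadability E ≤ dReadability E - 1 := Nat.sInf_le ⟨ls', lp', hL'⟩
  exact ⟨by omega, hdle⟩

end Readability
end

section
/- Let D = (V, A) be a finite digraph with at least one arc, and let φ(D) be the bipartite graph with parts V_s = {v_s : v ∈ V} and V_p = {v_p : v ∈ V} and edge set {(u_s, v_p) : (u,v) ∈ A}. Then r(φ(D)) ≤ r(D) − 1; in particular r(φ(D)) < r(D). -/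
namespace Readability

def sym (t p : ℕ) : ℕ := Nat.pair t p + 1
lemma sym_ne_zero (t p : ℕ) : sym t p ≠ 0 := Nat.succ_ne_zero _
lemma sym_inj {t p t' p' : ℕ} (h : sym t p = sym t' p') : t = t' ∧ p = p' :=
  Nat.pair_eq_pair.mp (Nat.succ_injective h)
def dsym (M : ℕ) : ℕ := sym 0 M
lemma dsym_inj {M M' : ℕ} (h : dsym M = dsym M') : M = M' := (sym_inj h).2

lemma pw_le {M : ℕ} (h : M ≠ 0) : 2 ^ M.log2 ≤ M := Nat.log2_self_le h
lemma lt_pw_succ (M : ℕ) : M < 2 ^ (M.log2 + 1) := Nat.lt_log2_self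
lemma pw_pos (M : ℕ) : 0 < 2 ^ M.log2 := Nat.pow_pos (by norm_num)

lemma log2_eq_of {t M : ℕ} (h1 : 2 ^ t ≤ M) (h2 : M < 2 ^ (t + 1)) : M.log2 = t := by
  have hM : M ≠ 0 := by have : (0:ℕ) < 2 ^ t := Nat.pow_pos (by norm_num); omega
  have a1 := pw_le hM
  have a2 := lt_pw_succ M
  have c1 : t < M.log2 + 1 := (Nat.pow_lt_pow_iff_right (by norm_num)).mp (lt_of_le_of_lt h1 a2)
  have c2 : M.log2 < t + 1 := (Nat.pow_lt_pow_iff_right (by norm_num)).mp (lt_of_le_of_lt a1 h2)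
  omega

def tau : ℕ → List ℕ
  | 0 => []
  | (M+1) =>
    tau ((M+1) - 2 ^ Nat.log2 (M+1)) ++
      dsym (M+1) :: (if (M+1) = 2 ^ Nat.log2 (M+1) then [] else tau M)
decreasing_by
  · have h2 : 1 ≤ 2 ^ Nat.log2 (M+1) := Nat.one_le_two_pow
    omega
  · omega

lemma tau_zero : tau 0 = [] := by rw [tau]

lemma tau_eq {M : ℕ} (h : M ≠ 0) :
    tau M = tau (M - 2 ^ M.log2) ++ dsym M :: (if M = 2 ^ M.log2 then [] else tau (M-1)) := by
  obtain ⟨m, rfl⟩ := Nat.exists_eq_succ_of_ne_zero h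
  rw [tau]
  simp

lemma tau_pow (t : ℕ) : tau (2 ^ t) = [dsym (2 ^ t)] := by
  have h : (2:ℕ) ^ t ≠ 0 := by positivity
  rw [tau_eq h, Nat.log2_two_pow]
  simp [tau]

/-! ### suffix helpers -/

lemma suffix_of_suffix_le {α : Type*} {l s t : List α} (hs : s <:+ l) (ht : t <:+ l)
    (h : s.length ≤ t.length) : s <:+ t := by
  obtain ⟨a, ha⟩ := hs
  obtain ⟨b, hb⟩ := ht
  have hL : a.length + s.length = b.length + t.length := by
    have := congrArg List.length (ha.trans hb.symm)
    simpa using this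
  have h1 : s = l.drop a.length := by rw [← ha]; simp
  have h2 : t = l.drop b.length := by rw [← hb]; simp
  have : s = t.drop (a.length - b.length) := by
    rw [h1, h2, List.drop_drop]
    congr 1
    omega
  rw [this]
  exact List.drop_suffix _ _

lemma suffix_eq_of_length {α : Type*} {l s t : List α} (hs : s <:+ l) (ht : t <:+ l)
    (h : s.length = t.length) : s = t := by
  rw [List.suffix_iff_eq_drop.mp hs, List.suffix_iff_eq_drop.mp ht, h]

lemma tau_suffix_of_le {t N : ℕ} (h1 : 2 ^ t ≤ N) :
    ∀ M, N ≤ M → M < 2 ^ (t+1) → tau N <:+ tau M := by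
  intro M
  induction M with
  | zero =>
    intro h2 _
    exfalso
    have : (0:ℕ) < 2 ^ t := Nat.pow_pos (by norm_num)
    omega
  | succ m ih =>
    intro h2 h3
    rcases eq_or_lt_of_le h2 with rfl|hlt
    · exact List.suffix_refl _
    · have hNm : N ≤ m := by omega
      have hsub := ih hNm (by omega)
      have hlog : (m+1).log2 = t := log2_eq_of (by omega) h3
      have hne : ¬ (m+1 = 2 ^ (m+1).log2) := by
        rw [hlog]; omega
      rw [tau_eq (Nat.succ_ne_zero m), if_neg hne]
      refine hsub.trans ?_
      have he : m + 1 - 1 = m := rfl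
      rw [he]
      exact (List.suffix_cons _ _).trans (List.suffix_append _ _)

lemma tau_prefix_low {M : ℕ} (h : M ≠ 0) : tau (M - 2 ^ M.log2) <+: tau M := by
  rw [tau_eq h]; exact List.prefix_append _ _

lemma tau_last {M : ℕ} (h : M ≠ 0) : [dsym (2 ^ M.log2)] <:+ tau M := by
  have := tau_suffix_of_le (t := M.log2) (le_refl _) M (pw_le h) (lt_pw_succ M)
  rwa [tau_pow] at this

lemma tau_ne_nil {M : ℕ} (h : M ≠ 0) : tau M ≠ [] := by
  rw [tau_eq h]
  simp

lemma mem_tau {a M : ℕ} (ha : a ∈ tau M) : ∃ M', M' ≠ 0 ∧ a = dsym M' := by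
  induction M using Nat.strong_induction_on with
  | _ M ih =>
    rcases Nat.eq_zero_or_pos M with rfl|hM
    · rw [tau_zero] at ha
      simp at ha
    · rw [tau_eq (by omega)] at ha
      rcases List.mem_append.mp ha with h|h
      · have hp := pw_pos M
        exact ih _ (by omega) h
      · rcases List.mem_cons.mp h with rfl|h
        · exact ⟨M, by omega, rfl⟩
        · by_cases hp : M = 2 ^ M.log2
          · rw [if_pos hp] at h
            simp at h
          · rw [if_neg hp] at h
            have hM2 : 2 ≤ M := by
              by_contra h2
              have hM1 : M = 1 := by omega
              subst hM1
              have hl : Nat.log2 1 = 0 := log2_eq_of (by norm_num) (by norm_num)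
              exact hp (by rw [hl]; norm_num)
            exact ih (M-1) (by omega) h

def occR (M : ℕ) : ℕ := if M = 2 ^ M.log2 then 0 else (tau (M-1)).length

lemma occ_tau {K : ℕ} {M : ℕ} (hM : M ≠ 0) {w2 : List ℕ}
    (hs : (dsym M :: w2) <:+ tau K) : occR M ≤ w2.length := by
  induction K using Nat.strong_induction_on generalizing w2 with
  | _ K ih =>
    rcases Nat.eq_zero_or_pos K with rfl|hK
    · rw [tau_zero] at hs
      have := hs.length_le
      simp at this
    · have hKeq := tau_eq (M := K) (by omega)
      set A := tau (K - 2 ^ K.log2) with hA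
      set B := (if K = 2 ^ K.log2 then [] else tau (K-1)) with hB
      rw [hKeq] at hs
      have hlen : w2.length + 1 ≤ A.length + (B.length + 1) := by
        have := hs.length_le
        simpa using this
      rcases lt_trichotomy w2.length B.length with h|h|h
      · -- inside B
        have hBs : B <:+ A ++ dsym K :: B :=
          (List.suffix_cons _ _).trans (List.suffix_append _ _)
        have hsB : (dsym M :: w2) <:+ B := suffix_of_suffix_le hs hBs (by simp; omega)
        by_cases hp : K = 2 ^ K.log2
        · rw [hB, if_pos hp] at hsB
          have := hsB.length_le
          simp at this
        · rw [hB, if_neg hp] at hsB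
          exact ih (K-1) (by omega) hsB
      · -- s = dsym K :: B
        have hBs : dsym K :: B <:+ A ++ dsym K :: B := List.suffix_append _ _
        have hEq : (dsym M :: w2) = dsym K :: B :=
          suffix_eq_of_length hs hBs (by simp [h])
        injection hEq with h1 h2
        have hMK : M = K := dsym_inj h1
        subst hMK
        rw [h2]
        by_cases hp : M = 2 ^ M.log2
        · unfold occR
          rw [if_pos hp]
          exact Nat.zero_le _
        · unfold occR
          rw [if_neg hp, hB, if_neg hp]
      · -- spills into A
        have hd : dsym M :: w2
            = (A ++ dsym K :: B).drop ((A ++ dsym K :: B).length - (w2.length + 1)) := by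
          simpa using List.suffix_iff_eq_drop.mp hs
        set j := (A ++ dsym K :: B).length - (w2.length + 1) with hj
        have hlenA : j < A.length := by
          simp only [hj, List.length_append, List.length_cons]
          omega
        rw [List.drop_append] at hd
        have hj0 : j - A.length = 0 := by omega
        rw [hj0] at hd
        simp only [List.drop_zero] at hd
        cases hAd : A.drop j with
        | nil =>
          exfalso
          have := congrArg List.length hAd
          simp at this
          omega
        | cons b y =>
          rw [hAd] at hd
          injection hd with h1 h2
          have hyA : dsym M :: y <:+ A := by
            rw [h1]
            rw [← hAd]
            exact List.drop_suffix _ _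
          have hp := pw_pos K
          have := ih (K - 2 ^ K.log2) (by omega) hyA
          have h3 : w2.length = y.length + (B.length + 1) := by
            rw [h2]
            simp
          omega


/-! ### Encoding finsets of naturals -/

def enc (S : Finset ℕ) : ℕ := ∑ w ∈ S, 2 ^ w

lemma enc_lt {S : Finset ℕ} {b : ℕ} (h : ∀ w ∈ S, w < b) : enc S < 2 ^ b := by
  have hsub : S ⊆ Finset.range b := fun w hw => Finset.mem_range.mpr (h w hw)
  have h1 : enc S ≤ ∑ w ∈ Finset.range b, 2 ^ w :=
    Finset.sum_le_sum_of_subset hsub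
  have h2 : ∑ w ∈ Finset.range b, 2 ^ w = 2 ^ b - 1 := by
    have := Nat.geomSum_eq (le_refl 2) b
    simpa using this
  have h3 : (0:ℕ) < 2 ^ b := Nat.pow_pos (by norm_num)
  omega

lemma enc_decomp {S : Finset ℕ} (hS : S.Nonempty) :
    enc S = 2 ^ S.max' hS + enc (S.erase (S.max' hS)) :=
  (Finset.add_sum_erase S _ (S.max'_mem hS)).symm

lemma enc_erase_lt {S : Finset ℕ} (hS : S.Nonempty) :
    enc (S.erase (S.max' hS)) < 2 ^ S.max' hS := by
  refine enc_lt fun w hw => ?_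
  rcases Finset.mem_erase.mp hw with ⟨hne, hmem⟩
  exact lt_of_le_of_ne (S.le_max' w hmem) hne

lemma enc_ne_zero {S : Finset ℕ} (hS : S.Nonempty) : enc S ≠ 0 := by
  have h1 := enc_decomp hS
  have h2 : (0:ℕ) < 2 ^ S.max' hS := Nat.pow_pos (by norm_num)
  omega

lemma log2_enc {S : Finset ℕ} (hS : S.Nonempty) : (enc S).log2 = S.max' hS := by
  have h1 := enc_decomp hS
  have h2 := enc_erase_lt hS
  refine log2_eq_of (by omega) ?_
  have h3 : 2 ^ (S.max' hS + 1) = 2 ^ S.max' hS + 2 ^ S.max' hS := by ring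
  omega

lemma low_enc {S : Finset ℕ} (hS : S.Nonempty) :
    enc S - 2 ^ (enc S).log2 = enc (S.erase (S.max' hS)) := by
  rw [log2_enc hS]
  have h1 := enc_decomp hS
  omega

lemma tau_filter_prefix (S : Finset ℕ) (hS : S.Nonempty) {u : ℕ} (hu : u ∈ S) :
    tau (enc (S.filter (fun w => w ≤ u))) <+: tau (enc S) := by
  induction S using Finset.strongInduction with
  | _ S ih =>
    have m := S.max' hS
    by_cases hmu : S.max' hS ≤ u
    · have hfe : S.filter (fun w => w ≤ u) = S :=
        Finset.filter_true_of_mem (fun w hw => le_trans (S.le_max' w hw) hmu)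
      rw [hfe]
    · have hum : u < S.max' hS := by
        have := S.le_max' u hu
        omega
      have hne : u ≠ S.max' hS := by omega
      have hu' : u ∈ S.erase (S.max' hS) := Finset.mem_erase.mpr ⟨hne, hu⟩
      have hS' : (S.erase (S.max' hS)).Nonempty := ⟨u, hu'⟩
      have hfe : S.filter (fun w => w ≤ u) = (S.erase (S.max' hS)).filter (fun w => w ≤ u) := by
        ext w
        simp only [Finset.mem_filter, Finset.mem_erase]
        constructor
        · rintro ⟨hw, hwu⟩
          exact ⟨⟨by omega, hw⟩, hwu⟩
        · rintro ⟨⟨_, hw⟩, hwu⟩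
          exact ⟨hw, hwu⟩
      have hss : S.erase (S.max' hS) ⊂ S := Finset.erase_ssubset (S.max'_mem hS)
      have hih := ih _ hss hS' hu'
      rw [hfe]
      refine hih.trans ?_
      have := tau_prefix_low (enc_ne_zero hS)
      rwa [low_enc hS] at this

lemma max'_filter_le {S : Finset ℕ} {u : ℕ} (hu : u ∈ S) :
    ∀ (h : (S.filter (fun w => w ≤ u)).Nonempty), (S.filter (fun w => w ≤ u)).max' h = u := by
  intro h
  refine le_antisymm ?_ ?_
  · refine Finset.max'_le _ _ _ fun w hw => ?_
    exact (Finset.mem_filter.mp hw).2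
  · exact Finset.le_max' (S.filter (fun w => w ≤ u)) u (Finset.mem_filter.mpr ⟨hu, le_refl u⟩)


/-! ### The labels -/

def kk (n : ℕ) : ℕ := 1 + ∑ M ∈ Finset.range (2 ^ n), (tau M).length

lemma len_tau_lt_kk {n M : ℕ} (h : M < 2 ^ n) : (tau M).length < kk n := by
  have h1 : (tau M).length ≤ ∑ M ∈ Finset.range (2 ^ n), (tau M).length :=
    Finset.single_le_sum (f := fun M => (tau M).length) (fun i _ => Nat.zero_le _) (Finset.mem_range.mpr h)
  unfold kk
  omega

lemma two_le_kk {n : ℕ} (hn : 1 ≤ n) : 2 ≤ kk n := by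
  have h1 : (tau 1).length < kk n := by
    refine len_tau_lt_kk ?_
    have : (2:ℕ) ^ 1 ≤ 2 ^ n := Nat.pow_le_pow_right (by norm_num) hn
    omega
  have h2 : tau 1 = [dsym 1] := by
    have := tau_pow 0
    norm_num at this
    exact this
  rw [h2] at h1
  simp at h1
  omega

def padX (n u : ℕ) : List ℕ :=
  (List.range (kk n - (tau (2 ^ (u+1) - 1)).length)).map (fun j => sym 1 (Nat.pair u j))

def XL (n u : ℕ) : List ℕ := padX n u ++ tau (2 ^ (u+1) - 1)

def padZ (n : ℕ) (S : Finset ℕ) (c : ℕ) : List ℕ :=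
  (List.range (kk n - (tau (enc S)).length)).map (fun j => sym 2 (Nat.pair c j))

def ZL (n : ℕ) (S : Finset ℕ) (c : ℕ) : List ℕ := tau (enc S) ++ padZ n S c

lemma pow_sub_one_lt {n u : ℕ} (h : u < n) : 2 ^ (u+1) - 1 < 2 ^ n := by
  have h1 : (2:ℕ) ^ (u+1) ≤ 2 ^ n := Nat.pow_le_pow_right (by norm_num) (by omega)
  have h2 : (0:ℕ) < 2 ^ (u+1) := Nat.pow_pos (by norm_num)
  omega

lemma XL_length {n u : ℕ} (h : u < n) : (XL n u).length = kk n := by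
  have := len_tau_lt_kk (pow_sub_one_lt h)
  simp [XL, padX]
  omega

lemma ZL_length {n : ℕ} {S : Finset ℕ} {c : ℕ} (h : ∀ w ∈ S, w < n) :
    (ZL n S c).length = kk n := by
  have hlt : enc S < 2 ^ n := enc_lt h
  have := len_tau_lt_kk hlt
  simp [ZL, padZ]
  omega

lemma log2_pow_sub_one (u : ℕ) : (2 ^ (u+1) - 1 : ℕ).log2 = u := by
  have h2 : (1:ℕ) ≤ 2 ^ u := Nat.one_le_two_pow
  have h3 : 2 ^ (u+1) = 2 ^ u + 2 ^ u := by ring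
  exact log2_eq_of (by omega) (by omega)

lemma tau_suffix_XL {n u N : ℕ} (h1 : 2 ^ u ≤ N) (h2 : N ≤ 2 ^ (u+1) - 1) :
    tau N <:+ XL n u := by
  have h3 : 2 ^ (u+1) - 1 < 2 ^ (u+1) := by
    have : (0:ℕ) < 2 ^ (u+1) := Nat.pow_pos (by norm_num)
    omega
  exact (tau_suffix_of_le h1 _ h2 h3).trans (List.suffix_append _ _)

lemma Xlast {n u : ℕ} : [dsym (2 ^ u)] <:+ XL n u := by
  have h2 : (1:ℕ) ≤ 2 ^ u := Nat.one_le_two_pow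
  have h3 : 2 ^ (u+1) = 2 ^ u + 2 ^ u := by ring
  have := tau_suffix_XL (n := n) (u := u) (N := 2 ^ u) (le_refl _) (by omega)
  rwa [tau_pow] at this

lemma occ_XL {n u M : ℕ} (hM : M ≠ 0) {w2 : List ℕ}
    (hs : (dsym M :: w2) <:+ XL n u) : occR M ≤ w2.length := by
  set T := tau (2 ^ (u+1) - 1) with hT
  by_cases hc : w2.length + 1 ≤ T.length
  · have hTs : T <:+ XL n u := List.suffix_append _ _
    have : (dsym M :: w2) <:+ T := suffix_of_suffix_le hs hTs (by simpa using hc)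
    exact occ_tau hM this
  · exfalso
    have hd : dsym M :: w2 = (XL n u).drop ((XL n u).length - (w2.length + 1)) := by
      simpa using List.suffix_iff_eq_drop.mp hs
    set j := (XL n u).length - (w2.length + 1) with hj
    have hlen1 : w2.length + 1 ≤ (XL n u).length := by
      have := hs.length_le
      simpa using this
    have hlenX : (XL n u).length = (padX n u).length + T.length := by simp [XL, hT]
    have hjA : j < (padX n u).length := by omega
    rw [show XL n u = padX n u ++ T from rfl, List.drop_append] at hd
    have hj0 : j - (padX n u).length = 0 := by omega
    rw [hj0] at hd
    simp only [List.drop_zero] at hd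
    cases hAd : (padX n u).drop j with
    | nil =>
      have := congrArg List.length hAd
      simp at this
      omega
    | cons b y =>
      rw [hAd] at hd
      injection hd with hd1 _
      have hbmem : b ∈ padX n u := by
        have : b ∈ (padX n u).drop j := by rw [hAd]; exact List.mem_cons_self
        exact List.mem_of_mem_drop this
      simp only [padX, List.mem_map, List.mem_range] at hbmem
      obtain ⟨jj, _, hjj⟩ := hbmem
      rw [← hjj] at hd1
      have := sym_inj hd1
      omega

lemma mem_XL {n u a : ℕ} (ha : a ∈ XL n u) : ∃ t p, t ≤ 1 ∧ a = sym t p := by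
  rcases List.mem_append.mp ha with h|h
  · simp only [padX, List.mem_map, List.mem_range] at h
    obtain ⟨j, _, hj⟩ := h
    exact ⟨1, _, le_refl _, hj.symm⟩
  · obtain ⟨M', _, hM'⟩ := mem_tau h
    exact ⟨0, M', by norm_num, hM'⟩

lemma mem_ZL {n a c : ℕ} {S : Finset ℕ} (ha : a ∈ ZL n S c) : ∃ t p, a = sym t p := by
  rcases List.mem_append.mp ha with h|h
  · obtain ⟨M', _, hM'⟩ := mem_tau h
    exact ⟨0, M', hM'⟩
  · simp only [padZ, List.mem_map, List.mem_range] at h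
    obtain ⟨j, _, hj⟩ := h
    exact ⟨2, _, hj.symm⟩


lemma main_neg {n : ℕ} (S : Finset ℕ) (hS : S.Nonempty) {i u : ℕ} (hi : 1 ≤ i)
    (hsuf : (tau (enc S)).take i <:+ XL n u) : u ∈ S := by
  induction S using Finset.strongInduction generalizing i with
  | _ S ih =>
    have hE : enc S ≠ 0 := enc_ne_zero hS
    have htaueq := tau_eq hE
    rw [low_enc hS] at htaueq
    set m := S.max' hS with hm
    set A := tau (enc (S.erase m)) with hA
    set B := (if enc S = 2 ^ (enc S).log2 then [] else tau (enc S - 1)) with hB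
    rw [htaueq, List.take_append] at hsuf
    by_cases hc1 : i ≤ A.length
    · have h0 : i - A.length = 0 := by omega
      rw [h0] at hsuf
      simp only [List.take_zero, List.append_nil] at hsuf
      have hSe : (S.erase m).Nonempty := by
        by_contra he
        have hemp : S.erase m = ∅ := Finset.not_nonempty_iff_eq_empty.mp he
        have : A = [] := by rw [hA, hemp, show enc ∅ = 0 from by simp [enc], tau_zero]
        rw [this] at hc1
        simp at hc1
        omega
      have := ih (S.erase m) (Finset.erase_ssubset (S.max'_mem hS)) hSe hi hsuf
      exact (Finset.mem_erase.mp this).2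
    · by_cases hc2 : i = A.length + 1
      · have htk : (dsym (enc S) :: B).take (i - A.length) = [dsym (enc S)] := by
          rw [hc2]
          simp
        rw [htk] at hsuf
        have h1 : [dsym (enc S)] <:+ XL n u := (List.suffix_append _ _).trans hsuf
        have h3 : [dsym (enc S)] = [dsym (2 ^ u)] := suffix_eq_of_length h1 Xlast rfl
        injection h3 with h4 _
        have h5 : enc S = 2 ^ u := dsym_inj h4
        have h6 : (enc S).log2 = u := by rw [h5, Nat.log2_two_pow]
        rw [log2_enc hS] at h6
        rw [← h6]
        exact S.max'_mem hS
      · have hi2 : A.length + 2 ≤ i := by omega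
        set i' := i - A.length - 1 with hi'
        have htk : (dsym (enc S) :: B).take (i - A.length)
            = dsym (enc S) :: B.take i' := by
          rw [show i - A.length = i' + 1 from by omega, List.take_succ_cons]
        rw [htk] at hsuf
        by_cases hc3 : B.length ≤ i'
        · have hBt : B.take i' = B := List.take_of_length_le hc3
          rw [hBt] at hsuf
          have hfull : tau (enc S) <:+ XL n u := by
            rw [htaueq]
            rwa [List.take_of_length_le (by omega)] at hsuf
          have h1 := (tau_last hE).trans hfull
          have h3 : [dsym (2 ^ (enc S).log2)] = [dsym (2 ^ u)] :=
            suffix_eq_of_length h1 Xlast rfl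
          injection h3 with h4 _
          have h5 : 2 ^ (enc S).log2 = 2 ^ u := dsym_inj h4
          have h6 : (enc S).log2 = u := Nat.pow_right_injective (le_refl 2) h5
          rw [log2_enc hS] at h6
          rw [← h6]
          exact S.max'_mem hS
        · exfalso
          have hBne : ¬ (enc S = 2 ^ (enc S).log2) := by
            intro hp
            apply hc3
            rw [hB, if_pos hp]
            simp
          have hBeq : B = tau (enc S - 1) := by rw [hB, if_neg hBne]
          have hsub : (dsym (enc S) :: B.take i') <:+ XL n u :=
            (List.suffix_append _ _).trans hsuf
          have hocc := occ_XL hE hsub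
          have hoccR : occR (enc S) = (tau (enc S - 1)).length := by
            unfold occR
            rw [if_neg hBne]
          have hlt : i' < B.length := by omega
          have htl : (B.take i').length = i' := by
            simp
            omega
          rw [hoccR, htl] at hocc
          rw [hBeq] at hlt
          omega

lemma main_pos {n u : ℕ} (S : Finset ℕ) (hw : ∀ w ∈ S, w < n) (hu : u ∈ S) (c : ℕ) :
    ∃ i, 1 ≤ i ∧ i ≤ kk n ∧ (XL n u).drop ((XL n u).length - i) = (ZL n S c).take i := by
  set S' := S.filter (fun w => w ≤ u) with hS'
  have hu' : u ∈ S' := Finset.mem_filter.mpr ⟨hu, le_refl _⟩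
  have hS'ne : S'.Nonempty := ⟨u, hu'⟩
  have hmax : S'.max' hS'ne = u := max'_filter_le hu hS'ne
  have hlog : (enc S').log2 = u := by rw [log2_enc hS'ne, hmax]
  have h2u : 2 ^ u ≤ enc S' := by
    have h := enc_decomp hS'ne
    rw [hmax] at h
    omega
  have hlt' : enc S' < 2 ^ (u+1) := by
    have := lt_pw_succ (enc S')
    rwa [hlog] at this
  have hsufX : tau (enc S') <:+ XL n u := tau_suffix_XL h2u (by omega)
  have hpre : tau (enc S') <+: tau (enc S) := tau_filter_prefix S ⟨u, hu⟩ hu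
  refine ⟨(tau (enc S')).length, ?_, ?_, ?_⟩
  · have h1 := tau_ne_nil (enc_ne_zero hS'ne)
    have : (tau (enc S')).length ≠ 0 := fun h0 => h1 (List.length_eq_zero_iff.mp h0)
    omega
  · have henc : enc S' < 2 ^ n := enc_lt (fun w hw' => hw w (Finset.mem_filter.mp hw').1)
    exact (len_tau_lt_kk henc).le
  · have hdrop : (XL n u).drop ((XL n u).length - (tau (enc S')).length) = tau (enc S') :=
      (List.suffix_iff_eq_drop.mp hsufX).symm
    have htake : (ZL n S c).take (tau (enc S')).length = tau (enc S') := by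
      have h1 : (tau (enc S')).length ≤ (tau (enc S)).length := hpre.length_le
      rw [ZL, List.take_append,
        show (tau (enc S')).length - (tau (enc S)).length = 0 from by omega]
      simp only [List.take_zero, List.append_nil]
      exact (List.prefix_iff_eq_take.mp hpre).symm
    rw [hdrop, htake]


lemma ne_zero_of_mem_ZL {n a c : ℕ} {S : Finset ℕ} (ha : a ∈ ZL n S c) : a ≠ 0 := by
  obtain ⟨t, p, hp⟩ := mem_ZL ha
  rw [hp]
  exact sym_ne_zero _ _

lemma takeWhile_len {l1 l2 : List ℕ} (h : ∀ a ∈ l1, a ≠ 0) :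
    ((l1 ++ 0 :: l2).takeWhile (fun a => a != 0)).length = l1.length := by
  induction l1 with
  | nil => simp
  | cons b t ihl =>
    have hb : b ≠ 0 := h b (by simp)
    have hb' : (b != 0) = true := by simpa using hb
    simp only [List.cons_append, List.takeWhile_cons, hb', if_true, List.length_cons]
    rw [ihl (fun a ha => h a (by simp [ha]))]

section Assemble

variable {V : Type*} [Fintype V] (A : V → V → Prop)

open Classical in
noncomputable def inS (v : V) : Finset ℕ :=
  (Finset.univ.filter
    (fun w : Fin (Fintype.card V) => A ((Fintype.equivFin V).symm w) v)).image Fin.val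

noncomputable def lab (v : V) : List ℕ :=
  ZL (Fintype.card V) (inS A v) ((Fintype.equivFin V) v) ++
    (0 :: sym 3 ((Fintype.equivFin V) v) :: 0 :: XL (Fintype.card V) ((Fintype.equivFin V) v))

lemma mem_inS {u v : V} : ((Fintype.equivFin V) u : ℕ) ∈ inS A v ↔ A u v := by
  classical
  simp only [inS, Finset.mem_image, Finset.mem_filter, Finset.mem_univ, true_and]
  constructor
  · rintro ⟨w, hw, hval⟩
    have : w = (Fintype.equivFin V) u := Fin.val_injective hval
    rw [this] at hw
    rwa [Equiv.symm_apply_apply] at hw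
  · intro h
    exact ⟨(Fintype.equivFin V) u, by rwa [Equiv.symm_apply_apply], rfl⟩

lemma inS_lt {v : V} : ∀ w ∈ inS A v, w < Fintype.card V := by
  intro w hw
  simp only [inS, Finset.mem_image] at hw
  obtain ⟨x, _, hx⟩ := hw
  rw [← hx]
  exact x.isLt

lemma lab_length (v : V) : (lab A v).length = 2 * kk (Fintype.card V) + 3 := by
  have h1 := ZL_length (n := Fintype.card V) (c := ((Fintype.equivFin V) v : ℕ)) (inS_lt A (v := v))
  have h2 := XL_length (n := Fintype.card V) ((Fintype.equivFin V) v).isLt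
  simp only [lab, List.length_append, List.length_cons, h1, h2]
  omega

lemma lab_injective : Function.Injective (lab A) := by
  intro u v huv
  have d1 := congrArg (List.drop (kk (Fintype.card V))) huv
  have h1 := ZL_length (n := Fintype.card V) (c := ((Fintype.equivFin V) u : ℕ)) (inS_lt A (v := u))
  have h2 := ZL_length (n := Fintype.card V) (c := ((Fintype.equivFin V) v : ℕ)) (inS_lt A (v := v))
  rw [lab, lab, List.drop_left' h1, List.drop_left' h2] at d1
  injection d1 with _ d2
  injection d2 with d3 _
  have h3 : ((Fintype.equivFin V) u : ℕ) = ((Fintype.equivFin V) v : ℕ) := (sym_inj d3).2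
  exact (Fintype.equivFin V).injective (Fin.val_injective h3)

lemma drop_lab (u : V) {i : ℕ} (hik : i ≤ kk (Fintype.card V)) :
    (lab A u).drop ((2 * kk (Fintype.card V) + 3) - i)
      = (XL (Fintype.card V) ((Fintype.equivFin V) u)).drop (kk (Fintype.card V) - i) := by
  have h1 := ZL_length (n := Fintype.card V) (c := ((Fintype.equivFin V) u : ℕ)) (inS_lt A (v := u))
  rw [lab, List.drop_append]
  rw [List.drop_eq_nil_of_le (by rw [h1]; omega), List.nil_append, h1]
  rw [show 2 * kk (Fintype.card V) + 3 - i - kk (Fintype.card V)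
      = (kk (Fintype.card V) - i) + 1 + 1 + 1 from by omega]
  rw [List.drop_succ_cons, List.drop_succ_cons, List.drop_succ_cons]

lemma take_lab (v : V) {i : ℕ} (hik : i ≤ kk (Fintype.card V)) :
    (lab A v).take i = (ZL (Fintype.card V) (inS A v) ((Fintype.equivFin V) v)).take i := by
  have h1 := ZL_length (n := Fintype.card V) (c := ((Fintype.equivFin V) v : ℕ)) (inS_lt A (v := v))
  rw [lab, List.take_append]
  rw [show i - (ZL (Fintype.card V) (inS A v) ((Fintype.equivFin V) v)).length = 0 from by
    rw [h1]; omega]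
  simp

lemma lab_fwd {u v : V} (h : A u v) :
    ∃ i, 1 ≤ i ∧ i ≤ kk (Fintype.card V) ∧ OverlapsBy (lab A u) (lab A v) i := by
  obtain ⟨i, hi1, hik, heq⟩ := main_pos (n := Fintype.card V) (inS A v) (inS_lt A)
    ((mem_inS A).mpr h) ((Fintype.equivFin V) v)
  have hX := XL_length (n := Fintype.card V) ((Fintype.equivFin V) u).isLt
  rw [hX] at heq
  refine ⟨i, hi1, hik, hi1, ?_, ?_⟩
  · rw [lab_length, lab_length]
    simp only [min_self]
    omega
  · rw [lab_length, drop_lab A u hik, take_lab A v hik]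
    exact heq

lemma lab_bwd_small {u v : V} {i : ℕ} (hi1 : 1 ≤ i) (hik : i ≤ kk (Fintype.card V))
    (heq : (XL (Fintype.card V) ((Fintype.equivFin V) u)).drop (kk (Fintype.card V) - i)
      = (ZL (Fintype.card V) (inS A v) ((Fintype.equivFin V) v)).take i) : A u v := by
  set S := inS A v with hS
  set L := (tau (enc S)).length with hL
  by_cases hcase : i ≤ L
  · have ht : (ZL (Fintype.card V) S ((Fintype.equivFin V) v)).take i = (tau (enc S)).take i := by
      rw [ZL, List.take_append, show i - L = 0 from by omega]
      simp
    rw [ht] at heq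
    have hsuf : (tau (enc S)).take i <:+ XL (Fintype.card V) ((Fintype.equivFin V) u) := by
      rw [← heq]
      exact List.drop_suffix _ _
    have hSne : S.Nonempty := by
      rcases Finset.eq_empty_or_nonempty S with he|hne
      · exfalso
        have hL0 : L = 0 := by
          rw [hL, he, show enc (∅ : Finset ℕ) = 0 from by simp [enc], tau_zero]
          rfl
        omega
      · exact hne
    have hu := main_neg S hSne hi1 hsuf
    exact (mem_inS A).mp hu
  · exfalso
    have h1 := ZL_length (n := Fintype.card V) (c := ((Fintype.equivFin V) v : ℕ)) (inS_lt A (v := v))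
    rw [← hS] at h1
    have hpadlen : (padZ (Fintype.card V) S ((Fintype.equivFin V) v)).length
        = kk (Fintype.card V) - L := by
      have h2 : (ZL (Fintype.card V) S ((Fintype.equivFin V) v)).length
          = L + (padZ (Fintype.card V) S ((Fintype.equivFin V) v)).length := by
        simp [ZL, hL]
      omega
    have hk' : (ZL (Fintype.card V) S ((Fintype.equivFin V) v)).take i
        = tau (enc S) ++ (padZ (Fintype.card V) S ((Fintype.equivFin V) v)).take (i - L) := by
      rw [ZL, List.take_append, List.take_of_length_le (by omega)]
    have hne : (padZ (Fintype.card V) S ((Fintype.equivFin V) v)).take (i - L) ≠ [] := by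
      have hlen : ((padZ (Fintype.card V) S ((Fintype.equivFin V) v)).take (i - L)).length
          = min (i - L) (kk (Fintype.card V) - L) := by
        rw [List.length_take, hpadlen]
      intro hnil
      rw [hnil] at hlen
      simp at hlen
      omega
    obtain ⟨a, ha⟩ := List.exists_mem_of_ne_nil _ hne
    have hamem : a ∈ padZ (Fintype.card V) S ((Fintype.equivFin V) v) := List.take_subset _ _ ha
    have haZ : a ∈ (ZL (Fintype.card V) S ((Fintype.equivFin V) v)).take i := by
      rw [hk']
      exact List.mem_append_right _ ha
    have haX : a ∈ XL (Fintype.card V) ((Fintype.equivFin V) u) := by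
      rw [← heq] at haZ
      exact List.drop_subset _ _ haZ
    obtain ⟨t, p, ht1, ht2⟩ := mem_XL haX
    simp only [padZ, List.mem_map, List.mem_range] at hamem
    obtain ⟨j, _, hj⟩ := hamem
    rw [← hj] at ht2
    have := (sym_inj ht2).1
    omega

lemma lab_bwd_big {u v : V} {i : ℕ} (hn1 : 1 ≤ Fintype.card V)
    (hik : kk (Fintype.card V) < i) (hir : i < 2 * kk (Fintype.card V) + 3)
    (heq : (lab A u).drop ((2 * kk (Fintype.card V) + 3) - i) = (lab A v).take i) : False := by
  set K := kk (Fintype.card V) with hK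
  have hk2 : 2 ≤ K := by rw [hK]; exact two_le_kk hn1
  have hZlenu := ZL_length (n := Fintype.card V) (c := ((Fintype.equivFin V) u : ℕ)) (inS_lt A (v := u))
  have hZlenv := ZL_length (n := Fintype.card V) (c := ((Fintype.equivFin V) v : ℕ)) (inS_lt A (v := v))
  rw [← hK] at hZlenu hZlenv
  have hcong : ((List.takeWhile (fun a => a != 0) ((lab A u).drop (2 * K + 3 - i))).length)
      = ((List.takeWhile (fun a => a != 0) ((lab A v).take i)).length) := by rw [heq]
  -- RHS computation
  set q := i - K - 1 with hq
  have hRHS : (lab A v).take i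
      = ZL (Fintype.card V) (inS A v) ((Fintype.equivFin V) v)
        ++ 0 :: (sym 3 ((Fintype.equivFin V) v) :: 0 :: XL (Fintype.card V) ((Fintype.equivFin V) v)).take q := by
    rw [lab, List.take_append, List.take_of_length_le (by rw [hZlenv]; omega),
      hZlenv]
    congr 1
    rw [show i - K = q + 1 from by omega, List.take_succ_cons]
  have hZvne : ∀ a ∈ ZL (Fintype.card V) (inS A v) ((Fintype.equivFin V) v), a ≠ 0 :=
    fun a ha => ne_zero_of_mem_ZL ha
  rw [hRHS, takeWhile_len hZvne, hZlenv] at hcong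
  -- LHS case analysis
  have hcases : i = K + 1 ∨ i = K + 2 ∨ (K + 3 ≤ i ∧ i ≤ 2 * K + 2) := by omega
  rcases hcases with hc | hc | ⟨hc1, hc2⟩
  · have hre : lab A u
        = (ZL (Fintype.card V) (inS A u) ((Fintype.equivFin V) u) ++ [0, sym 3 ((Fintype.equivFin V) u)])
          ++ (0 :: XL (Fintype.card V) ((Fintype.equivFin V) u)) := by
      rw [lab]
      simp
    rw [show 2 * K + 3 - i = K + 2 from by omega, hre,
      List.drop_left' (by simp [hZlenu])] at hcong
    simp at hcong
    omega
  · have hre : lab A u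
        = (ZL (Fintype.card V) (inS A u) ((Fintype.equivFin V) u) ++ [0])
          ++ (sym 3 ((Fintype.equivFin V) u) :: 0 :: XL (Fintype.card V) ((Fintype.equivFin V) u)) := by
      rw [lab]
      simp
    rw [show 2 * K + 3 - i = K + 1 from by omega, hre,
      List.drop_left' (by simp [hZlenu])] at hcong
    have hsne : (sym 3 ((Fintype.equivFin V) u) != 0) = true := by
      simpa using sym_ne_zero 3 ((Fintype.equivFin V) u)
    rw [List.takeWhile_cons, hsne] at hcong
    simp at hcong
    omega
  · have hre : (lab A u).drop (2 * K + 3 - i)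
        = (ZL (Fintype.card V) (inS A u) ((Fintype.equivFin V) u)).drop (2 * K + 3 - i)
          ++ 0 :: (sym 3 ((Fintype.equivFin V) u) :: 0 :: XL (Fintype.card V) ((Fintype.equivFin V) u)) := by
      rw [lab, List.drop_append,
        show 2 * K + 3 - i - (ZL (Fintype.card V) (inS A u) ((Fintype.equivFin V) u)).length = 0
          from by rw [hZlenu]; omega]
      rw [List.drop_zero]
    have hZune : ∀ a ∈ (ZL (Fintype.card V) (inS A u) ((Fintype.equivFin V) u)).drop (2 * K + 3 - i),
        a ≠ 0 := fun a ha => ne_zero_of_mem_ZL (List.drop_subset _ _ ha)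
    rw [hre, takeWhile_len hZune, List.length_drop, hZlenu] at hcong
    omega

theorem exists_labeling {W : Type*} [Fintype W] [Nonempty W] (B : W → W → Prop) :
    ∃ r ℓ, IsInjOverlapLabeling B r ℓ := by
  refine ⟨2 * kk (Fintype.card W) + 3, lab B, lab_length B, lab_injective B, ?_⟩
  intro u v
  have hn1 : 1 ≤ Fintype.card W := Fintype.card_pos
  constructor
  · intro h
    obtain ⟨i, hi1, hik, hov⟩ := lab_fwd B h
    have hne : {j | OverlapsBy (lab B u) (lab B v) j}.Nonempty := ⟨i, hov⟩
    have hmem : OverlapsBy (lab B u) (lab B v) (ov (lab B u) (lab B v)) := Nat.sInf_mem hne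
    have hle : ov (lab B u) (lab B v) ≤ i := Nat.sInf_le hov
    have h1 := hmem.1
    exact ⟨by omega, by omega⟩
  · rintro ⟨h0, hr⟩
    have hne : {j | OverlapsBy (lab B u) (lab B v) j}.Nonempty := by
      by_contra hcon
      rw [Set.not_nonempty_iff_eq_empty] at hcon
      have hzero : ov (lab B u) (lab B v) = 0 := by
        unfold ov
        rw [hcon]
        exact Nat.sInf_empty
      omega
    have hmem : OverlapsBy (lab B u) (lab B v) (ov (lab B u) (lab B v)) := Nat.sInf_mem hne
    obtain ⟨hi1, hi2, hieq⟩ := hmem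
    rw [lab_length] at hieq
    by_cases hik : ov (lab B u) (lab B v) ≤ kk (Fintype.card W)
    · refine lab_bwd_small B hi1 hik ?_
      rw [← drop_lab B u hik, ← take_lab B v hik]
      exact hieq
    · exact (lab_bwd_big B hn1 (by omega) hr hieq).elim

end Assemble

/-- For a finite digraph `D = (V, A)` with at least one arc, the bipartite graph
`φ(D)` (parts two copies of `V`, edges `(u_s, v_p)` for `(u,v) ∈ A`) satisfies
`r(φ(D)) ≤ r(D) − 1`, in particular `r(φ(D)) < r(D)`. -/
theorem statement1 {V : Type*} [Fintype V] (A : V → V → Prop) (hA : ∃ u v, A u v) :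
    bReadability A ≤ dReadability A - 1 ∧ bReadability A < dReadability A := by
  obtain ⟨u0, v0, huv⟩ := hA
  have : Nonempty V := ⟨u0⟩
  obtain ⟨r0, ℓ0, h0⟩ := exists_labeling A
  have hdne : {r | ∃ ℓ : V → List ℕ, IsInjOverlapLabeling A r ℓ}.Nonempty := ⟨r0, ℓ0, h0⟩
  have hd : dReadability A ∈ {r | ∃ ℓ : V → List ℕ, IsInjOverlapLabeling A r ℓ} :=
    Nat.sInf_mem hdne
  obtain ⟨ℓ, hlen, hinj, hiff⟩ := hd
  set r := dReadability A with hrdef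
  have hov0 := (hiff u0 v0).mp huv
  have hr2 : 2 ≤ r := by
    have hne : {j | OverlapsBy (ℓ u0) (ℓ v0) j}.Nonempty := by
      by_contra hcon
      rw [Set.not_nonempty_iff_eq_empty] at hcon
      have : ov (ℓ u0) (ℓ v0) = 0 := by
        unfold ov
        rw [hcon]
        exact Nat.sInf_empty
      omega
    have hmem : OverlapsBy (ℓ u0) (ℓ v0) (ov (ℓ u0) (ℓ v0)) := Nat.sInf_mem hne
    have := hmem.1
    omega
  have hble : bReadability A ≤ r - 1 := by
    apply Nat.sInf_le
    refine ⟨fun u => (ℓ u).drop 1, fun v => (ℓ v).take (r-1), ?_, ?_, ?_⟩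
    · intro u
      rw [List.length_drop, hlen u]
    · intro v
      rw [List.length_take, hlen v]
      omega
    · intro u v
      constructor
      · intro h
        have h1 := (hiff u v).mp h
        have hne : {j | OverlapsBy (ℓ u) (ℓ v) j}.Nonempty := by
          by_contra hcon
          rw [Set.not_nonempty_iff_eq_empty] at hcon
          have : ov (ℓ u) (ℓ v) = 0 := by
            unfold ov
            rw [hcon]
            exact Nat.sInf_empty
          omega
        have hmem : OverlapsBy (ℓ u) (ℓ v) (ov (ℓ u) (ℓ v)) := Nat.sInf_mem hne
        obtain ⟨hi1, hi2, hieq⟩ := hmem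
        set i := ov (ℓ u) (ℓ v) with hidef
        rw [hlen u, hlen v] at hi2
        simp only [min_self] at hi2
        refine ⟨i, hi1, ?_, ?_⟩
        · rw [List.length_drop, List.length_take, hlen u, hlen v]
          omega
        · rw [List.length_drop, hlen u, List.drop_drop]
          rw [show 1 + (r - 1 - i) = r - i from by omega]
          rw [List.take_take]
          rw [show min i (r-1) = i from by omega]
          have h2 := hieq
          rw [hlen u] at h2
          exact h2
      · rintro ⟨i, hi1, hi2, hieq⟩
        rw [List.length_drop, List.length_take, hlen u, hlen v] at hi2
        have hi2' : i ≤ r - 1 := by omega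
        have hov : OverlapsBy (ℓ u) (ℓ v) i := by
          refine ⟨hi1, ?_, ?_⟩
          · rw [hlen u, hlen v]
            omega
          · rw [hlen u]
            have h2 := hieq
            rw [List.length_drop, hlen u, List.drop_drop] at h2
            rw [show 1 + (r - 1 - i) = r - i from by omega] at h2
            rw [List.take_take, show min i (r-1) = i from by omega] at h2
            exact h2
        apply (hiff u v).mpr
        have hle : ov (ℓ u) (ℓ v) ≤ i := Nat.sInf_le hov
        have hne : {j | OverlapsBy (ℓ u) (ℓ v) j}.Nonempty := ⟨i, hov⟩
        have hmem : OverlapsBy (ℓ u) (ℓ v) (ov (ℓ u) (ℓ v)) := Nat.sInf_mem hne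
        have h3 := hmem.1
        exact ⟨by omega, by omega⟩
  exact ⟨hble, by omega⟩


end Readability
end

section
/- Let G = (V_s, V_p, E) be a balanced bipartite graph with V_s = {v_s : v ∈ [n]} and V_p = {v_p : v ∈ [n]}, and let ψ(G) be the digraph on vertex set [n] with arc set {(u,v) : (u_s, v_p) ∈ E}. Then r(ψ(G)) ≤ 2·r(G) + 1. -/
namespace Readability

section Construction

variable {n : ℕ} (E : Fin n → Fin n → Prop)

def code (u v : Fin n) : ℕ := u.1 * n + v.1
def lett (u v : Fin n) : ℕ := 3 * code u v
def wgt (u v : Fin n) : ℕ := 4 ^ code u v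

lemma code_lt_left {x u : Fin n} (h : x < u) (v : Fin n) : code x v < code u v := by
  have hn : 0 < n := v.pos
  have hx : x.1 < u.1 := h
  simp only [code]
  nlinarith

lemma code_lt_right (u : Fin n) {y v : Fin n} (h : y < v) : code u y < code u v := by
  simp only [code]; exact Nat.add_lt_add_left h _

lemma code_lt_sq (u v : Fin n) : code u v < n * n := by
  have h1 : u.1 < n := u.2
  have h2 : v.1 < n := v.2
  simp only [code]; nlinarith

lemma code_inj {u v x y : Fin n} (h : code u v = code x y) : u = x ∧ v = y := by
  simp only [code] at h
  have hv : v.1 < n := v.2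
  have hy : y.1 < n := y.2
  have hu : u.1 = x.1 := by
    rcases Nat.lt_trichotomy u.1 x.1 with hlt | he | hgt
    · nlinarith
    · exact he
    · nlinarith
  refine ⟨Fin.ext hu, Fin.ext ?_⟩
  rw [hu] at h
  omega

lemma wgt_pos (u v : Fin n) : 0 < wgt u v := Nat.pow_pos (by norm_num)

noncomputable def predS (u v : Fin n) : Option (Fin n) :=
  letI := Classical.dec
  if h : (Finset.univ.filter (fun y => E u y ∧ y < v)).Nonempty then
    some ((Finset.univ.filter (fun y => E u y ∧ y < v)).max' h) else none

noncomputable def predP (u v : Fin n) : Option (Fin n) :=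
  letI := Classical.dec
  if h : (Finset.univ.filter (fun x => E x v ∧ x < u)).Nonempty then
    some ((Finset.univ.filter (fun x => E x v ∧ x < u)).max' h) else none

lemma predS_spec {u v y : Fin n} (h : predS E u v = some y) : E u y ∧ y < v := by
  unfold predS at h
  split at h
  · rename_i hne
    injection h with h
    have hm := Finset.max'_mem _ hne
    rw [h] at hm
    simpa using hm
  · exact absurd h (by simp)

lemma predP_spec {u v x : Fin n} (h : predP E u v = some x) : E x v ∧ x < u := by
  unfold predP at h
  split at h
  · rename_i hne
    injection h with h
    have hm := Finset.max'_mem _ hne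
    rw [h] at hm
    simpa using hm
  · exact absurd h (by simp)

lemma predS_max {u v y' : Fin n} (he : E u y') (hlt : y' < v) :
    ∃ z, predS E u v = some z ∧ y' ≤ z := by
  unfold predS
  split
  · rename_i hne
    exact ⟨_, rfl, Finset.le_max' _ _ (by simp [he, hlt])⟩
  · rename_i hne
    exact absurd ⟨y', by simp [he, hlt]⟩ hne

lemma predP_max {u v x' : Fin n} (he : E x' v) (hlt : x' < u) :
    ∃ z, predP E u v = some z ∧ x' ≤ z := by
  unfold predP
  split
  · rename_i hne
    exact ⟨_, rfl, Finset.le_max' _ _ (by simp [he, hlt])⟩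
  · rename_i hne
    exact absurd ⟨x', by simp [he, hlt]⟩ hne

noncomputable def qlen (u v : Fin n) : ℕ :=
  match predP E u v with
  | some x => wgt x v
  | none => 0

noncomputable def slen (u v : Fin n) : ℕ :=
  match predS E u v with
  | some y => wgt u y
  | none => 0

lemma qlen4 (u v : Fin n) : 4 * qlen E u v ≤ wgt u v := by
  unfold qlen
  cases hp : predP E u v with
  | none => simp [wgt_pos]
  | some x =>
      have hx := (predP_spec E hp).2
      have h1 : code x v + 1 ≤ code u v := code_lt_left hx v
      simp only [wgt]
      calc 4 * 4 ^ code x v = 4 ^ (code x v + 1) := by ring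
      _ ≤ 4 ^ code u v := Nat.pow_le_pow_right (by norm_num) h1

lemma slen4 (u v : Fin n) : 4 * slen E u v ≤ wgt u v := by
  unfold slen
  cases hs : predS E u v with
  | none => simp [wgt_pos]
  | some y =>
      have hy := (predS_spec E hs).2
      have h1 : code u y + 1 ≤ code u v := code_lt_right u hy
      simp only [wgt]
      calc 4 * 4 ^ code u y = 4 ^ (code u y + 1) := by ring
      _ ≤ 4 ^ code u v := Nat.pow_le_pow_right (by norm_num) h1

noncomputable def Pf : ℕ → Fin n → Fin n → List ℕ
  | 0, _, _ => []
  | k+1, u, v =>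
      (match predP E u v with | some x => Pf k x v | none => []) ++
      (List.replicate (wgt u v - qlen E u v - slen E u v) (lett u v) ++
       (match predS E u v with | some y => Pf k u y | none => []))

lemma Pf_stable : ∀ (c : ℕ) (u v : Fin n) (k₁ k₂ : ℕ), code u v = c → code u v < k₁ →
    code u v < k₂ → Pf E k₁ u v = Pf E k₂ u v := by
  intro c
  induction c using Nat.strong_induction_on with
  | _ c IH =>
    intro u v k₁ k₂ hc h₁ h₂
    match k₁, k₂, h₁, h₂ with
    | k₁+1, k₂+1, h₁, h₂ =>
      simp only [Pf]
      congr 1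
      · cases hp : predP E u v with
        | none => rfl
        | some x =>
            have hlt : code x v < code u v := code_lt_left (predP_spec E hp).2 v
            exact IH _ (by omega) x v k₁ k₂ rfl (by omega) (by omega)
      congr 1
      cases hs : predS E u v with
      | none => rfl
      | some y =>
          have hlt : code u y < code u v := code_lt_right u (predS_spec E hs).2
          exact IH _ (by omega) u y k₁ k₂ rfl (by omega) (by omega)

noncomputable def P (u v : Fin n) : List ℕ := Pf E (code u v + 1) u v

lemma P_eq (u v : Fin n) : P E u v =
    (match predP E u v with | some x => P E x v | none => []) ++
    (List.replicate (wgt u v - qlen E u v - slen E u v) (lett u v) ++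
     (match predS E u v with | some y => P E u y | none => [])) := by
  show Pf E (code u v + 1) u v = _
  simp only [Pf]
  congr 1
  · cases hp : predP E u v with
    | none => rfl
    | some x =>
        show Pf E (code u v) x v = P E x v
        exact Pf_stable E _ x v _ _ rfl (code_lt_left (predP_spec E hp).2 v)
          (Nat.lt_succ_self _)
  congr 1
  cases hs : predS E u v with
  | none => rfl
  | some y =>
      show Pf E (code u v) u y = P E u y
      exact Pf_stable E _ u y _ _ rfl (code_lt_right u (predS_spec E hs).2)
        (Nat.lt_succ_self _)

lemma Plen : ∀ (c : ℕ) (u v : Fin n), code u v = c → (P E u v).length = wgt u v := by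
  intro c
  induction c using Nat.strong_induction_on with
  | _ c IH =>
    intro u v hc
    rw [P_eq]
    have h4q := qlen4 E u v
    have h4s := slen4 E u v
    have hw := wgt_pos u v
    have hq : (match predP E u v with | some x => P E x v | none => ([] : List ℕ)).length
        = qlen E u v := by
      cases hp : predP E u v with
      | none => simp [qlen, hp]
      | some x =>
          have hlt : code x v < code u v := code_lt_left (predP_spec E hp).2 v
          show (P E x v).length = qlen E u v
          rw [qlen, hp]
          exact IH _ (by omega) x v rfl
    have hs : (match predS E u v with | some y => P E u y | none => ([] : List ℕ)).length
        = slen E u v := by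
      cases hs : predS E u v with
      | none => simp [slen, hs]
      | some y =>
          have hlt : code u y < code u v := code_lt_right u (predS_spec E hs).2
          show (P E u y).length = slen E u v
          rw [slen, hs]
          exact IH _ (by omega) u y rfl
    simp only [List.length_append, List.length_replicate, hq, hs]
    omega

lemma Qlen (u v : Fin n) :
    (match predP E u v with | some x => P E x v | none => ([] : List ℕ)).length
      = qlen E u v := by
  cases hp : predP E u v with
  | none => simp [qlen, hp]
  | some x =>
      show (P E x v).length = qlen E u v
      rw [qlen, hp]
      exact Plen E _ x v rfl

lemma Slen (u v : Fin n) :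
    (match predS E u v with | some y => P E u y | none => ([] : List ℕ)).length
      = slen E u v := by
  cases hs : predS E u v with
  | none => simp [slen, hs]
  | some y =>
      show (P E u y).length = slen E u v
      rw [slen, hs]
      exact Plen E _ u y rfl

lemma qs_lt (u v : Fin n) : qlen E u v + slen E u v < wgt u v := by
  have := qlen4 E u v; have := slen4 E u v; have := wgt_pos u v; omega

lemma P_mid (u v : Fin n) (t : ℕ) (h1 : qlen E u v ≤ t) (h2 : t < wgt u v - slen E u v) :
    (P E u v)[t]? = some (lett u v) := by
  rw [P_eq]
  rw [List.getElem?_append_right (by rw [Qlen]; exact h1)]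
  rw [Qlen]
  rw [List.getElem?_append, if_pos (by simp only [List.length_replicate]; omega)]
  rw [List.getElem?_replicate, if_pos (by omega)]

lemma P_last : ∀ (c : ℕ) (u v : Fin n), code u v = c →
    ∃ y₀, (P E u v)[wgt u v - 1]? = some (lett u y₀) := by
  intro c
  induction c using Nat.strong_induction_on with
  | _ c IH =>
    intro u v hc
    have hqs := qs_lt E u v
    have hw := wgt_pos u v
    cases hs : predS E u v with
    | none =>
        refine ⟨v, ?_⟩
        apply P_mid
        · omega
        · have h0 : slen E u v = 0 := by rw [slen, hs]
          omega
    | some y =>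
        have hlt : code u y < code u v := code_lt_right u (predS_spec E hs).2
        have hsl : slen E u v = wgt u y := by rw [slen, hs]
        have hwy := wgt_pos u y
        obtain ⟨y₀, hy₀⟩ := IH _ (by omega) u y rfl
        refine ⟨y₀, ?_⟩
        rw [P_eq]
        rw [List.getElem?_append_right (by rw [Qlen]; omega)]
        rw [Qlen]
        rw [List.getElem?_append_right (by simp only [List.length_replicate]; omega)]
        simp only [List.length_replicate, hs]
        show (P E u y)[wgt u v - 1 - qlen E u v - (wgt u v - qlen E u v - slen E u v)]? = _
        have : wgt u v - 1 - qlen E u v - (wgt u v - qlen E u v - slen E u v)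
            = wgt u y - 1 := by omega
        rw [this]
        exact hy₀

lemma P_head : ∀ (c : ℕ) (u v : Fin n), code u v = c →
    ∃ x₀, (P E u v)[0]? = some (lett x₀ v) := by
  intro c
  induction c using Nat.strong_induction_on with
  | _ c IH =>
    intro u v hc
    have hqs := qs_lt E u v
    have hw := wgt_pos u v
    cases hp : predP E u v with
    | none =>
        refine ⟨u, ?_⟩
        apply P_mid
        · rw [qlen, hp]
        · have h0 : qlen E u v = 0 := by rw [qlen, hp]
          omega
    | some x =>
        have hlt : code x v < code u v := code_lt_left (predP_spec E hp).2 v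
        have hwx := wgt_pos x v
        obtain ⟨x₀, hx₀⟩ := IH _ (by omega) x v rfl
        have hq : qlen E u v = wgt x v := by rw [qlen, hp]
        refine ⟨x₀, ?_⟩
        rw [P_eq]
        rw [List.getElem?_append, if_pos (by rw [Qlen]; omega)]
        rw [hp]
        exact hx₀

lemma P_mod3 : ∀ (c : ℕ) (u v : Fin n), code u v = c → ∀ b ∈ P E u v, b % 3 = 0 := by
  intro c
  induction c using Nat.strong_induction_on with
  | _ c IH =>
    intro u v hc b hb
    rw [P_eq] at hb
    simp only [List.mem_append] at hb
    rcases hb with hb | hb | hb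
    · cases hp : predP E u v with
      | none => rw [hp] at hb; simp at hb
      | some x =>
          rw [hp] at hb
          have hlt : code x v < code u v := code_lt_left (predP_spec E hp).2 v
          exact IH _ (by omega) x v rfl b hb
    · have := List.eq_of_mem_replicate hb
      subst this
      simp [lett, Nat.mul_mod_right]
    · cases hs : predS E u v with
      | none => rw [hs] at hb; simp at hb
      | some y =>
          rw [hs] at hb
          have hlt : code u y < code u v := code_lt_right u (predS_spec E hs).2
          exact IH _ (by omega) u y rfl b hb

lemma chainS : ∀ (c : ℕ) (u v v' : Fin n), v.1 = c → E u v → E u v' → v' ≤ v →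
    P E u v' <:+ P E u v := by
  intro c
  induction c using Nat.strong_induction_on with
  | _ c IH =>
    intro u v v' hc hv hv' hle
    rcases eq_or_lt_of_le hle with he | hlt
    · rw [he]
    · obtain ⟨z, hz, hlez⟩ := predS_max E hv' hlt
      have hzspec := predS_spec E hz
      have h1 : P E u v' <:+ P E u z :=
        IH z.1 (by have : z.1 < v.1 := hzspec.2; omega) u z v' rfl hzspec.1 hv' hlez
      refine h1.trans ?_
      refine ⟨(match predP E u v with | some x => P E x v | none => ([] : List ℕ)) ++
        List.replicate (wgt u v - qlen E u v - slen E u v) (lett u v), ?_⟩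
      conv_rhs => rw [P_eq E u v]
      rw [hz]
      simp [List.append_assoc]

lemma chainP : ∀ (c : ℕ) (u u' v : Fin n), u.1 = c → E u v → E u' v → u' ≤ u →
    P E u' v <+: P E u v := by
  intro c
  induction c using Nat.strong_induction_on with
  | _ c IH =>
    intro u u' v hc hv hv' hle
    rcases eq_or_lt_of_le hle with he | hlt
    · rw [he]
    · obtain ⟨z, hz, hlez⟩ := predP_max E hv' hlt
      have hzspec := predP_spec E hz
      have h1 : P E u' v <+: P E z v :=
        IH z.1 (by have : z.1 < u.1 := hzspec.2; omega) z u' v rfl hzspec.1 hv' hlez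
      refine h1.trans ?_
      refine ⟨List.replicate (wgt u v - qlen E u v - slen E u v) (lett u v) ++
        (match predS E u v with | some y => P E u y | none => ([] : List ℕ)), ?_⟩
      conv_rhs => rw [P_eq E u v]
      rw [hz]

lemma suffix_drop_eq {α : Type*} {l L : List α} (h : l <:+ L) {i : ℕ} (hi : i ≤ l.length) :
    L.drop (L.length - i) = l.drop (l.length - i) := by
  obtain ⟨t, rfl⟩ := h
  rw [List.length_append]
  have he : t.length + l.length - i = t.length + (l.length - i) := by omega
  rw [he, List.drop_length_add_append]

lemma prefix_take_eq {α : Type*} {l L : List α} (h : l <+: L) {i : ℕ} (hi : i ≤ l.length) :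
    L.take i = l.take i := by
  obtain ⟨t, rfl⟩ := h
  rw [List.take_append_of_le_length hi]

lemma lett_inj {u v x y : Fin n} (h : lett u v = lett x y) : u = x ∧ v = y := by
  apply code_inj
  simp only [lett] at h
  omega

lemma wgt4 {u y x v : Fin n} (h : code u y < code x v) : 4 * wgt u y ≤ wgt x v := by
  simp only [wgt]
  calc 4 * 4 ^ code u y = 4 ^ (code u y + 1) := by ring
  _ ≤ 4 ^ code x v := Nat.pow_le_pow_right (by norm_num) h

lemma main : ∀ (c : ℕ) (u y x v : Fin n) (i : ℕ), code u y + code x v = c →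
    E u y → E x v → 1 ≤ i → i ≤ wgt u y → i ≤ wgt x v →
    (P E u y).drop (wgt u y - i) = (P E x v).take i → E u v := by
  intro c
  induction c using Nat.strong_induction_on with
  | _ c IH =>
    intro u y x v i hc hey hxv hi1 hie hif heq
    by_cases hA : i ≤ slen E u y
    · cases hs : predS E u y with
      | none =>
          exfalso
          have h0 : slen E u y = 0 := by rw [slen, hs]
          omega
      | some y' =>
          have hsl : slen E u y = wgt u y' := by rw [slen, hs]
          have hy' := predS_spec E hs
          have hclt : code u y' < code u y := code_lt_right u hy'.2
          have hsuf : P E u y' <:+ P E u y := by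
            refine ⟨(match predP E u y with | some x => P E x y | none => ([] : List ℕ)) ++
              List.replicate (wgt u y - qlen E u y - slen E u y) (lett u y), ?_⟩
            conv_rhs => rw [P_eq E u y]
            rw [hs]
            simp [List.append_assoc]
          have hlen' : (P E u y').length = wgt u y' := Plen E _ u y' rfl
          have hlen : (P E u y).length = wgt u y := Plen E _ u y rfl
          have heq' : (P E u y').drop (wgt u y' - i) = (P E x v).take i := by
            rw [← heq, ← hlen', ← hlen]
            exact (suffix_drop_eq hsuf (by omega)).symm
          exact IH _ (by omega) u y' x v i rfl hy'.1 hxv hi1 (by omega) hif heq'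
    · by_cases hB : i ≤ qlen E x v
      · cases hp : predP E x v with
        | none =>
            exfalso
            have h0 : qlen E x v = 0 := by rw [qlen, hp]
            omega
        | some x' =>
            have hql : qlen E x v = wgt x' v := by rw [qlen, hp]
            have hx' := predP_spec E hp
            have hclt : code x' v < code x v := code_lt_left hx'.2 v
            have hpre : P E x' v <+: P E x v := by
              refine ⟨List.replicate (wgt x v - qlen E x v - slen E x v) (lett x v) ++
                (match predS E x v with | some y => P E x y | none => ([] : List ℕ)), ?_⟩
              conv_rhs => rw [P_eq E x v]
              rw [hp]
            have hlen' : (P E x' v).length = wgt x' v := Plen E _ x' v rfl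
            have heq' : (P E u y).drop (wgt u y - i) = (P E x' v).take i := by
              rw [heq]
              exact prefix_take_eq hpre (by omega)
            exact IH _ (by omega) u y x' v i rfl hey hx'.1 hi1 hie (by omega) heq'
      · push_neg at hA hB
        rcases lt_trichotomy (code u y) (code x v) with hlt | heqc | hgt
        · -- compare last entries (position i - 1)
          have h1 := congrArg (fun l => l[i-1]?) heq
          simp only [List.getElem?_drop, List.getElem?_take] at h1
          rw [if_pos (by omega)] at h1
          have hidx : wgt u y - i + (i - 1) = wgt u y - 1 := by omega
          rw [hidx] at h1
          obtain ⟨y₀, hy₀⟩ := P_last E _ u y rfl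
          have h4 : 4 * i ≤ wgt x v := le_trans (by omega) (wgt4 hlt)
          have h4s := slen4 E x v
          have hmid := P_mid E x v (i-1) (by omega) (by omega)
          rw [hy₀, hmid] at h1
          injection h1 with h1
          obtain ⟨hux, -⟩ := lett_inj h1
          rw [hux]; exact hxv
        · obtain ⟨hux, hyv⟩ := code_inj heqc
          rw [hux]
          exact hxv
        · -- compare first entries (position 0)
          have h1 := congrArg (fun l => l[0]?) heq
          simp only [List.getElem?_drop, List.getElem?_take] at h1
          rw [if_pos (by omega)] at h1
          rw [Nat.add_zero] at h1
          obtain ⟨x₀, hx₀⟩ := P_head E _ x v rfl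
          have h4 : 4 * i ≤ wgt u y := le_trans (by omega) (wgt4 hgt)
          have h4q := qlen4 E u y
          have hmid := P_mid E u y (wgt u y - i) (by omega) (by omega)
          rw [hx₀, hmid] at h1
          injection h1 with h1
          obtain ⟨hux, hyv⟩ := lett_inj h1
          rw [hyv] at hey
          exact hey

lemma suffix_drop_self {α : Type*} {l L : List α} (h : l <:+ L) :
    L.drop (L.length - l.length) = l := by
  have := suffix_drop_eq h (le_refl l.length)
  simpa using this

lemma prefix_take_self {α : Type*} {l L : List α} (h : l <+: L) :
    L.take l.length = l := by
  have := prefix_take_eq h (le_refl l.length)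
  simpa using this

noncomputable def nbrS (u : Fin n) : Finset (Fin n) :=
  letI := Classical.dec
  Finset.univ.filter (fun v => E u v)

noncomputable def nbrP (v : Fin n) : Finset (Fin n) :=
  letI := Classical.dec
  Finset.univ.filter (fun u => E u v)

lemma wgt_lt_r (u v : Fin n) : wgt u v < 4 ^ (n * n) :=
  Nat.pow_lt_pow_right (by norm_num) (code_lt_sq u v)

noncomputable def lsC (u : Fin n) : List ℕ :=
  if h : (nbrS E u).Nonempty then
    List.replicate (4 ^ (n*n) - wgt u ((nbrS E u).max' h)) (3 * u.1 + 1)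
      ++ P E u ((nbrS E u).max' h)
  else List.replicate (4 ^ (n*n)) (3 * u.1 + 1)

noncomputable def lpC (v : Fin n) : List ℕ :=
  if h : (nbrP E v).Nonempty then
    P E ((nbrP E v).max' h) v
      ++ List.replicate (4 ^ (n*n) - wgt ((nbrP E v).max' h) v) (3 * v.1 + 2)
  else List.replicate (4 ^ (n*n)) (3 * v.1 + 2)

lemma maxS_edge (u : Fin n) (h : (nbrS E u).Nonempty) : E u ((nbrS E u).max' h) := by
  have := (nbrS E u).max'_mem h
  simp only [nbrS, Finset.mem_filter] at this
  exact this.2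

lemma maxP_edge (v : Fin n) (h : (nbrP E v).Nonempty) : E ((nbrP E v).max' h) v := by
  have := (nbrP E v).max'_mem h
  simp only [nbrP, Finset.mem_filter] at this
  exact this.2

lemma lsC_length (u : Fin n) : (lsC E u).length = 4 ^ (n*n) := by
  unfold lsC
  split
  · rename_i h
    have := wgt_lt_r u ((nbrS E u).max' h)
    simp only [List.length_append, List.length_replicate, Plen E _ u _ rfl]
    omega
  · simp

lemma lpC_length (v : Fin n) : (lpC E v).length = 4 ^ (n*n) := by
  unfold lpC
  split
  · rename_i h
    have := wgt_lt_r ((nbrP E v).max' h) v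
    simp only [List.length_append, List.length_replicate, Plen E _ _ v rfl]
    omega
  · simp

lemma lsC_suffix {u v : Fin n} (he : E u v) : P E u v <:+ lsC E u := by
  have hmem : v ∈ nbrS E u := by simp [nbrS, he]
  have h : (nbrS E u).Nonempty := ⟨v, hmem⟩
  have hle : v ≤ (nbrS E u).max' h := Finset.le_max' _ _ hmem
  have h1 : P E u v <:+ P E u ((nbrS E u).max' h) :=
    chainS E _ u _ v rfl (maxS_edge E u h) he hle
  refine h1.trans ?_
  rw [lsC, dif_pos h]
  exact List.suffix_append _ _

lemma lpC_prefix {u v : Fin n} (he : E u v) : P E u v <+: lpC E v := by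
  have hmem : u ∈ nbrP E v := by simp [nbrP, he]
  have h : (nbrP E v).Nonempty := ⟨u, hmem⟩
  have hle : u ≤ (nbrP E v).max' h := Finset.le_max' _ _ hmem
  have h1 : P E u v <+: P E ((nbrP E v).max' h) v :=
    chainP E _ _ u v rfl (maxP_edge E v h) he hle
  refine h1.trans ?_
  rw [lpC, dif_pos h]
  exact List.prefix_append _ _

lemma lsC_last (u : Fin n) (h : (nbrS E u).Nonempty) :
    ∃ y₀, (lsC E u)[4 ^ (n*n) - 1]? = some (lett u y₀) := by
  set M := (nbrS E u).max' h with hM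
  have hw := wgt_pos u M
  have hwr := wgt_lt_r u M
  obtain ⟨y₀, hy₀⟩ := P_last E _ u M rfl
  refine ⟨y₀, ?_⟩
  rw [lsC, dif_pos h, ← hM]
  rw [List.getElem?_append_right (by simp only [List.length_replicate]; omega)]
  simp only [List.length_replicate]
  have : 4 ^ (n*n) - 1 - (4 ^ (n*n) - wgt u M) = wgt u M - 1 := by omega
  rw [this]
  exact hy₀

lemma lpC_head (v : Fin n) (h : (nbrP E v).Nonempty) :
    ∃ x₀, (lpC E v)[0]? = some (lett x₀ v) := by
  set M := (nbrP E v).max' h with hM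
  have hw := wgt_pos M v
  obtain ⟨x₀, hx₀⟩ := P_head E _ M v rfl
  refine ⟨x₀, ?_⟩
  rw [lpC, dif_pos h]
  rw [List.getElem?_append, if_pos (by rw [Plen E _ M v rfl]; omega)]
  exact hx₀

lemma lsC_overlap_lpC {u v : Fin n} (i : ℕ) (hov : OverlapsBy (lsC E u) (lpC E v) i) :
    E u v := by
  obtain ⟨hi1, hi2, heq⟩ := hov
  rw [lsC_length, lpC_length, min_self] at hi2
  rw [lsC_length] at heq
  by_cases hS : (nbrS E u).Nonempty
  · by_cases hP : (nbrP E v).Nonempty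
    · set M := (nbrS E u).max' hS with hMdef
      set M' := (nbrP E v).max' hP with hM'def
      have hwM := wgt_pos u M
      have hwM' := wgt_pos M' v
      have hwrM := wgt_lt_r u M
      have hwrM' := wgt_lt_r M' v
      -- i is at most wgt u M
      have hiM : i ≤ wgt u M := by
        by_contra hgt
        push_neg at hgt
        have h0 := congrArg (fun l => l[0]?) heq
        simp only [List.getElem?_drop, List.getElem?_take, Nat.add_zero] at h0
        rw [if_pos (by omega)] at h0
        obtain ⟨x₀, hx₀⟩ := lpC_head E v hP
        rw [hx₀] at h0
        have hrep : (lsC E u)[4 ^ (n*n) - i]? = some (3 * u.1 + 1) := by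
          rw [lsC, dif_pos hS]
          rw [List.getElem?_append, if_pos (by simp only [List.length_replicate, ← hMdef]; omega)]
          rw [List.getElem?_replicate, if_pos (by simp only [← hMdef]; omega)]
        rw [hrep] at h0
        injection h0 with h0
        simp only [lett] at h0
        omega
      have hiM' : i ≤ wgt M' v := by
        by_contra hgt
        push_neg at hgt
        have h0 := congrArg (fun l => l[i-1]?) heq
        simp only [List.getElem?_drop, List.getElem?_take] at h0
        rw [if_pos (by omega)] at h0
        obtain ⟨y₀, hy₀⟩ := lsC_last E u hS
        have hidx : 4 ^ (n*n) - i + (i - 1) = 4 ^ (n*n) - 1 := by omega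
        rw [hidx, hy₀] at h0
        have hrep : (lpC E v)[i-1]? = some (3 * v.1 + 2) := by
          rw [lpC, dif_pos hP, ← hM'def]
          rw [List.getElem?_append_right (by rw [Plen E _ M' v rfl]; omega)]
          rw [Plen E _ M' v rfl]
          rw [List.getElem?_replicate, if_pos (by omega)]
        rw [hrep] at h0
        injection h0 with h0
        simp only [lett] at h0
        omega
      -- reduce to P strings
      have hsuf : P E u M <:+ lsC E u := by
        rw [lsC, dif_pos hS]
        exact List.suffix_append _ _
      have hpre : P E M' v <+: lpC E v := by
        rw [lpC, dif_pos hP]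
        exact List.prefix_append _ _
      have hL : (lsC E u).drop ((lsC E u).length - i)
          = (P E u M).drop (wgt u M - i) := by
        have := suffix_drop_eq hsuf (i := i) (by rw [Plen E _ u M rfl]; omega)
        rw [this, Plen E _ u M rfl]
      have hR : (lpC E v).take i = (P E M' v).take i :=
        prefix_take_eq hpre (by rw [Plen E _ M' v rfl]; omega)
      have heq' : (P E u M).drop (wgt u M - i) = (P E M' v).take i := by
        rw [← hL, ← hR, lsC_length]
        exact heq
      exact main E _ u M M' v i rfl (maxS_edge E u hS) (maxP_edge E v hP) hi1 hiM hiM' heq'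
    · exfalso
      have h0 := congrArg (fun l => l[i-1]?) heq
      simp only [List.getElem?_drop, List.getElem?_take] at h0
      rw [if_pos (by omega)] at h0
      obtain ⟨y₀, hy₀⟩ := lsC_last E u hS
      have hidx : 4 ^ (n*n) - i + (i - 1) = 4 ^ (n*n) - 1 := by omega
      rw [hidx, hy₀] at h0
      have hrep : (lpC E v)[i-1]? = some (3 * v.1 + 2) := by
        rw [lpC, dif_neg hP]
        rw [List.getElem?_replicate, if_pos (by omega)]
      rw [hrep] at h0
      injection h0 with h0
      simp only [lett] at h0
      omega
  · exfalso
    have h0 := congrArg (fun l => l[0]?) heq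
    simp only [List.getElem?_drop, List.getElem?_take, Nat.add_zero] at h0
    rw [if_pos (by omega)] at h0
    have hrep : (lsC E u)[4 ^ (n*n) - i]? = some (3 * u.1 + 1) := by
      rw [lsC, dif_neg hS]
      rw [List.getElem?_replicate, if_pos (by omega)]
    rw [hrep] at h0
    by_cases hP : (nbrP E v).Nonempty
    · obtain ⟨x₀, hx₀⟩ := lpC_head E v hP
      rw [hx₀] at h0
      injection h0 with h0
      simp only [lett] at h0
      omega
    · have hrep2 : (lpC E v)[0]? = some (3 * v.1 + 2) := by
        rw [lpC, dif_neg hP]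
        rw [List.getElem?_replicate, if_pos (by simp [Nat.pow_pos])]
      rw [hrep2] at h0
      injection h0 with h0
      omega

lemma exists_labeling_s2 :
    ∃ (ls lp : Fin n → List ℕ), (∀ u, (ls u).length = 4 ^ (n*n)) ∧
      (∀ v, (lp v).length = 4 ^ (n*n)) ∧
      ∀ u v, E u v ↔ ∃ i, OverlapsBy (ls u) (lp v) i := by
  refine ⟨lsC E, lpC E, lsC_length E, lpC_length E, fun u v => ⟨fun he => ?_, fun hov => ?_⟩⟩
  · refine ⟨wgt u v, wgt_pos u v, ?_, ?_⟩
    · rw [lsC_length, lpC_length, min_self]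
      exact le_of_lt (wgt_lt_r u v)
    · have hsuf := lsC_suffix E he
      have hpre := lpC_prefix E he
      have hlen : (P E u v).length = wgt u v := Plen E _ u v rfl
      have hL := suffix_drop_self hsuf
      rw [hlen] at hL
      have hR := prefix_take_self hpre
      rw [hlen] at hR
      rw [hL, hR]
  · obtain ⟨i, hov⟩ := hov
    exact lsC_overlap_lpC E i hov

end Construction

/-- For every balanced bipartite graph `G` on parts `Fin n`, the digraph `ψ(G)`
on `Fin n` with arcs `(u,v)` exactly when `(u_s, v_p)` is an edge of `G` satisfies
`r(ψ(G)) ≤ 2·r(G) + 1`. -/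
theorem statement2 (n : ℕ) (E : Fin n → Fin n → Prop) :
    dReadability E ≤ 2 * bReadability E + 1 := by
  classical
  have hne : {r | ∃ (ls lp : Fin n → List ℕ), IsOverlapLabeling E r ls lp}.Nonempty := by
    obtain ⟨ls, lp, h1, h2, h3⟩ := exists_labeling_s2 E
    exact ⟨4 ^ (n*n), ls, lp, h1, h2, h3⟩
  have hmem : ∃ (ls lp : Fin n → List ℕ),
      IsOverlapLabeling E (bReadability E) ls lp := Nat.sInf_mem hne
  obtain ⟨ls, lp, hls, hlp, hiff⟩ := hmem
  set rb := bReadability E with hrb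
  set f : ℕ → ℕ := fun m => m + n with hf
  set ℓ : Fin n → List ℕ :=
    fun w => (lp w).map f ++ ([w.1] ++ (ls w).map f) with hℓ
  have hlen : ∀ w, (ℓ w).length = 2 * rb + 1 := by
    intro w
    simp only [hℓ, List.length_append, List.length_map, List.length_singleton,
      hls w, hlp w]
    omega
  have hsep : ∀ w : Fin n, (ℓ w)[rb]? = some w.1 := by
    intro w
    show ((lp w).map f ++ ([w.1] ++ (ls w).map f))[rb]? = some w.1
    rw [List.getElem?_append_right (by simp [hlp w])]
    simp [hlp w]
  have htail : ∀ (w : Fin n) (t : ℕ), rb + 1 ≤ t → t ≤ 2 * rb →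
      ∃ m, (ℓ w)[t]? = some (m + n) := by
    intro w t ht1 ht2
    show ∃ m, ((lp w).map f ++ ([w.1] ++ (ls w).map f))[t]? = some (m + n)
    rw [List.getElem?_append_right (by simp [hlp w]; omega)]
    rw [List.getElem?_append_right (by simp [hlp w]; omega)]
    have hidx : t - ((lp w).map f).length - [w.1].length < (ls w).length := by
      simp [hlp w, hls w]; omega
    refine ⟨(ls w)[t - ((lp w).map f).length - [w.1].length], ?_⟩
    rw [List.getElem?_map]
    rw [List.getElem?_eq_getElem hidx]
    rfl
  apply Nat.sInf_le
  refine ⟨ℓ, hlen, ?_, ?_⟩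
  · -- injectivity
    intro a b hab
    have h0 := congrArg (fun l => l[rb]?) hab
    simp only [hsep a, hsep b] at h0
    injection h0 with h0
    exact Fin.ext h0
  · intro a b
    rw [hiff a b]
    constructor
    · rintro ⟨i, hi1, hi2, heqi⟩
      rw [hls a, hlp b, min_self] at hi2
      have hov : OverlapsBy (ℓ a) (ℓ b) i := by
        refine ⟨hi1, by rw [hlen a, hlen b, min_self]; omega, ?_⟩
        rw [hlen a]
        have hL : (ℓ a).drop (2 * rb + 1 - i) = ((ls a).drop (rb - i)).map f := by
          show ((lp a).map f ++ ([a.1] ++ (ls a).map f)).drop (2 * rb + 1 - i)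
              = ((ls a).drop (rb - i)).map f
          rw [← List.append_assoc]
          have hlc : ((lp a).map f ++ [a.1]).length = rb + 1 := by simp [hlp a]
          have hd : 2 * rb + 1 - i = ((lp a).map f ++ [a.1]).length + (rb - i) := by
            rw [hlc]; omega
          rw [hd, List.drop_length_add_append, ← List.map_drop]
        have hR : (ℓ b).take i = ((lp b).take i).map f := by
          show ((lp b).map f ++ ([b.1] ++ (ls b).map f)).take i = ((lp b).take i).map f
          rw [List.take_append_of_le_length (by simp [hlp b]; omega), ← List.map_take]
        rw [hL, hR]
        rw [hls a] at heqi
        rw [heqi]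
      have hpos : 0 < ov (ℓ a) (ℓ b) := by
        have h1 := Nat.sInf_mem (⟨i, hov⟩ : {j | OverlapsBy (ℓ a) (ℓ b) j}.Nonempty)
        exact lt_of_lt_of_le one_pos h1.1
      have hlt : ov (ℓ a) (ℓ b) < 2 * rb + 1 :=
        lt_of_le_of_lt (Nat.sInf_le hov) (by omega)
      exact ⟨hpos, hlt⟩
    · rintro ⟨hpos, hlt⟩
      have hjne : {j | OverlapsBy (ℓ a) (ℓ b) j}.Nonempty := by
        by_contra h
        rw [Set.not_nonempty_iff_eq_empty] at h
        rw [ov, h] at hpos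
        simp at hpos
      set j := ov (ℓ a) (ℓ b) with hjdef
      have hj : OverlapsBy (ℓ a) (ℓ b) j := Nat.sInf_mem hjne
      obtain ⟨hj1, hj2, heqj⟩ := hj
      rw [hlen a, hlen b, min_self] at hj2
      rw [hlen a] at heqj
      by_cases hjr : j ≤ rb
      · refine ⟨j, hj1, by rw [hls a, hlp b, min_self]; exact hjr, ?_⟩
        have hL : (ℓ a).drop (2 * rb + 1 - j) = ((ls a).drop (rb - j)).map f := by
          show ((lp a).map f ++ ([a.1] ++ (ls a).map f)).drop (2 * rb + 1 - j)
              = ((ls a).drop (rb - j)).map f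
          rw [← List.append_assoc]
          have hlc : ((lp a).map f ++ [a.1]).length = rb + 1 := by simp [hlp a]
          have hd : 2 * rb + 1 - j = ((lp a).map f ++ [a.1]).length + (rb - j) := by
            rw [hlc]; omega
          rw [hd, List.drop_length_add_append, ← List.map_drop]
        have hR : (ℓ b).take j = ((lp b).take j).map f := by
          show ((lp b).map f ++ ([b.1] ++ (ls b).map f)).take j = ((lp b).take j).map f
          rw [List.take_append_of_le_length (by simp [hlp b]; omega), ← List.map_take]
        rw [hL, hR] at heqj
        have hinj : Function.Injective f := fun p q h => by
          simp only [hf] at h; omega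
        have := List.map_injective_iff.mpr hinj heqj
        rw [hls a]
        exact this
      · exfalso
        push_neg at hjr
        have hj2' : j ≤ 2 * rb := by omega
        have h0 := congrArg (fun l => l[rb]?) heqj
        simp only [List.getElem?_drop, List.getElem?_take] at h0
        rw [if_pos (by omega)] at h0
        obtain ⟨m, hm⟩ := htail a (2 * rb + 1 - j + rb) (by omega) (by omega)
        rw [hm, hsep b] at h0
        injection h0 with h0
        have := b.2
        omega


end Readability
end

section
/- Let G = (V_s, V_p, E) be a C4-free bipartite graph with at least one edge, and let t = min{ k : there exists a decomposition of G of size k that satisfies the strict P4-rule }. Then t/2 < r(G) ≤ t; more precisely, r(G) ≤ t and t ≤ 2·r(G) − 1. -/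
namespace Readability

section Statement4Aux

variable {Vs Vp : Type*}

/-- Positioned walks in the "slot graph" of a weighted bipartite graph: `ReachN E w n u j v t`
means there is an alternating walk with `n+1` "double steps" from the suffix-slot `(u,j)` to
the prefix-slot `(v,t)` along which the slot identifications forced by the decomposition hold. -/
inductive ReachN (E : Vs → Vp → Prop) (w : Vs → Vp → ℕ) : ℕ → Vs → ℕ → Vp → ℕ → Prop
  | single {u v j t} : E u v → 1 ≤ j → 1 ≤ t → j + t = w u v + 1 → ReachN E w 0 u j v t
  | cons {n u j v t u' j' v' t'} : E u v → 1 ≤ j → 1 ≤ t → j + t = w u v + 1 →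
      E u' v → t ≤ w u' v → j' + t = w u' v + 1 → ReachN E w n u' j' v' t' →
      ReachN E w (n + 1) u j v' t'

def Reach (E : Vs → Vp → Prop) (w : Vs → Vp → ℕ) (u : Vs) (j : ℕ) (v : Vp) (t : ℕ) : Prop :=
  ∃ n, ReachN E w n u j v t

variable {E : Vs → Vp → Prop} {w : Vs → Vp → ℕ}

lemma reach_ext : ∀ {n A aj V vt}, ReachN E w n A aj V vt →
    ∀ {bu bj V' vt'}, E bu V → vt ≤ w bu V → bj + vt = w bu V + 1 →
      Reach E w bu bj V' vt' → Reach E w A aj V' vt' := by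
  intro n A aj V vt h1
  induction h1 with
  | single e hj ht hsum =>
      intro bu bj V' vt' e' hle hsum' h3
      obtain ⟨m, h3⟩ := h3
      exact ⟨m + 1, .cons e hj ht hsum e' hle hsum' h3⟩
  | cons e hj ht hsum e' hle hsum' tail ih =>
      intro bu bj V' vt' e2 hle2 hsum2 h3
      obtain ⟨m, D⟩ := ih e2 hle2 hsum2 h3
      exact ⟨m + 1, .cons e hj ht hsum e' hle hsum' D⟩

lemma reach_glue : ∀ {n bu bj V vt}, ReachN E w n bu bj V vt →
    ∀ {A aj V' vt'}, Reach E w A aj V vt → Reach E w bu bj V' vt' →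
      Reach E w A aj V' vt' := by
  intro n bu bj V vt h2
  induction h2 with
  | single e hj ht hsum =>
      intro A aj V' vt' h1 h3
      exact reach_ext h1.choose_spec e (by omega) hsum h3
  | cons e hj ht hsum e' hle hsum' tail ih =>
      intro A aj V' vt' h1 h3
      refine ih h1 ?_
      obtain ⟨n3, h3⟩ := h3
      exact ⟨n3 + 1, .cons e' (by omega) ht hsum' e (by omega) hsum h3⟩

lemma reach_glue' {bu bj V vt A aj V' vt'} (h2 : Reach E w bu bj V vt)
    (h1 : Reach E w A aj V vt) (h3 : Reach E w bu bj V' vt') :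
    Reach E w A aj V' vt' := by
  obtain ⟨n, h2⟩ := h2; exact reach_glue h2 h1 h3

/-- Helper for applying the strict P4 rule together with C4-freeness. -/
lemma p4Strict (hC : C4Free E) (hP4 : SatisfiesStrictP4Rule E w) {s1 s2 : Vs} {p1 p2 : Vp}
    (h12 : s1 ≠ s2) (hpq : p1 ≠ p2) (e1 : E s1 p1) (e2 : E s2 p1) (e3 : E s2 p2)
    (h1 : w s1 p1 ≤ w s2 p1) (h2 : w s2 p2 ≤ w s2 p1) :
    w s1 p1 + w s2 p2 < w s2 p1 := by
  have hne : ¬ E s1 p2 := fun h => hC s1 s2 p1 p2 h12 hpq ⟨e1, h, e2, e3⟩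
  exact hP4 s1 s2 p1 p2 ⟨h12, hpq, e1, e2, e3, hne⟩ (by omega)

/-- The key structural lemma about positioned walks under the strict P4 rule. -/
lemma lemC (hC : C4Free E) (hP4 : SatisfiesStrictP4Rule E w) :
    ∀ n (u1 : Vs) (j1 : ℕ) (u0 : Vs) (q0 : Vp) (v : Vp) (t : ℕ),
      ReachN E w n u1 j1 v t → E u0 q0 → E u1 q0 → u0 ≠ u1 →
      w u0 q0 ≤ w u1 q0 → w u1 q0 + 1 ≤ j1 + w u0 q0 → j1 ≤ w u1 q0 →
      (w u1 q0 + 2 ≤ j1 + t) ∨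
      (v = q0 ∧ j1 + t = w u1 q0 + 1) ∨
      (∃ n' < n, ReachN E w n' u0 (j1 + w u0 q0 - w u1 q0) v t) ∨
      (∃ n' < n, ∃ u2, u2 ≠ u0 ∧ E u2 q0 ∧ w u2 q0 < w u0 q0 ∧
        w u1 q0 + 1 ≤ j1 + w u2 q0 ∧ ReachN E w n' u2 (j1 + w u2 q0 - w u1 q0) v t) := by
  intro n
  induction n using Nat.strong_induction_on with
  | _ n IH =>
  intro u1 j1 u0 q0 v t hR he0 he1 hne01 hAB hBA hjB
  cases hR with
  | single e hj ht hsum =>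
      by_cases hvq : v = q0
      · subst hvq; exact Or.inr (Or.inl ⟨rfl, by omega⟩)
      · have hBa : w u1 q0 < w u1 v := by
          by_contra hh
          push_neg at hh
          have := p4Strict hC hP4 hne01 (fun h => hvq h.symm) he0 he1 e hAB hh
          omega
        exact Or.inl (by omega)
  | cons e hj ht hsum e' hle hsum' tail =>
      rename_i m v1 t1 u2 j2
      by_cases hvq : v1 = q0
      · rw [hvq] at e hsum e' hle hsum'
        by_cases h21 : u2 = u1
        · rw [h21] at e' hsum' tail
          have hj2 : j2 = j1 := by omega
          rcases IH m (by omega) u1 j1 u0 q0 v t (hj2 ▸ tail) he0 he1 hne01 hAB hBA hjB with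
            h | h | ⟨n', hn', D⟩ | ⟨n', hn', u3, h3a, h3b, h3c, h3d, D⟩
          · exact Or.inl h
          · exact Or.inr (Or.inl h)
          · exact Or.inr (Or.inr (Or.inl ⟨n', by omega, D⟩))
          · exact Or.inr (Or.inr (Or.inr ⟨n', by omega, u3, h3a, h3b, h3c, h3d, D⟩))
        · by_cases h20 : u2 = u0
          · rw [h20] at e' hsum' tail
            have hj2 : j2 = j1 + w u0 q0 - w u1 q0 := by omega
            exact Or.inr (Or.inr (Or.inl ⟨m, by omega, hj2 ▸ tail⟩))
          · by_cases hbA : w u2 q0 < w u0 q0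
            · refine Or.inr (Or.inr (Or.inr ⟨m, by omega, u2, h20, e', hbA, by omega, ?_⟩))
              have hj2 : j2 = j1 + w u2 q0 - w u1 q0 := by omega
              exact hj2 ▸ tail
            · push_neg at hbA
              rcases IH m (by omega) u2 j2 u0 q0 v t tail he0 e' (fun h => h20 h.symm) hbA
                  (by omega) (by omega) with
                h | h | ⟨n', hn', D⟩ | ⟨n', hn', u3, h3a, h3b, h3c, h3d, D⟩
              · exact Or.inl (by omega)
              · exact Or.inr (Or.inl ⟨h.1, by omega⟩)
              · refine Or.inr (Or.inr (Or.inl ⟨n', by omega, ?_⟩))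
                have hpos : j2 + w u0 q0 - w u2 q0 = j1 + w u0 q0 - w u1 q0 := by omega
                exact hpos ▸ D
              · refine Or.inr (Or.inr (Or.inr ⟨n', by omega, u3, h3a, h3b, h3c, by omega, ?_⟩))
                have hpos : j2 + w u3 q0 - w u2 q0 = j1 + w u3 q0 - w u1 q0 := by omega
                exact hpos ▸ D
      · -- v1 ≠ q0 : the walk moves to a new prefix-vertex; weights must strictly increase
        have hBa : w u1 q0 < w u1 v1 := by
          by_contra hh
          push_neg at hh
          have := p4Strict hC hP4 hne01 (fun h => hvq h.symm) he0 he1 e hAB hh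
          omega
        by_cases h21 : u2 = u1
        · rw [h21] at e' hsum' tail
          have hj2 : j2 = j1 := by omega
          rcases IH m (by omega) u1 j1 u0 q0 v t (hj2 ▸ tail) he0 he1 hne01 hAB hBA hjB with
            h | h | ⟨n', hn', D⟩ | ⟨n', hn', u3, h3a, h3b, h3c, h3d, D⟩
          · exact Or.inl h
          · exact Or.inr (Or.inl h)
          · exact Or.inr (Or.inr (Or.inl ⟨n', by omega, D⟩))
          · exact Or.inr (Or.inr (Or.inr ⟨n', by omega, u3, h3a, h3b, h3c, h3d, D⟩))
        · by_cases hba : w u2 v1 < w u1 v1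
          · exfalso
            have := p4Strict hC hP4 h21 hvq e' e he1 (le_of_lt hba) (le_of_lt hBa)
            omega
          · push_neg at hba
            rcases IH m (by omega) u2 j2 u1 v1 v t tail e e' (fun h => h21 h.symm) hba
                (by omega) (by omega) with
              h | h | ⟨n', hn', D⟩ | ⟨n', hn', u3, h3a, h3b, h3c, h3d, D⟩
            · exact Or.inl (by omega)
            · exact Or.inl (by omega)
            · have hD : j2 + w u1 v1 - w u2 v1 = j1 := by omega
              rcases IH n' (by omega) u1 j1 u0 q0 v t (hD ▸ D) he0 he1 hne01 hAB hBA hjB with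
                h | h | ⟨n'', hn'', D'⟩ | ⟨n'', hn'', u4, h4a, h4b, h4c, h4d, D'⟩
              · exact Or.inl h
              · exact Or.inr (Or.inl h)
              · exact Or.inr (Or.inr (Or.inl ⟨n'', by omega, D'⟩))
              · exact Or.inr (Or.inr (Or.inr ⟨n'', by omega, u4, h4a, h4b, h4c, h4d, D'⟩))
            · exfalso
              have := p4Strict hC hP4 h3a hvq h3b e he1 (le_of_lt h3c) (le_of_lt hBa)
              omega

/-- Non-adjacent pairs admit a slot on every antidiagonal that is not reachable. -/
lemma master (hC : C4Free E) (hP4 : SatisfiesStrictP4Rule E w) {u : Vs} {v : Vp}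
    (hv : ¬ E u v) {i : ℕ} (hi : 1 ≤ i) :
    ∃ j t, 1 ≤ j ∧ 1 ≤ t ∧ j + t = i + 1 ∧ ¬ Reach E w u j v t := by
  classical
  obtain ⟨J, hJlt, hJub, hJcase⟩ :
      ∃ J, J < i ∧ (∀ q, E u q → w u q < i → w u q ≤ J) ∧
        (J = 0 ∨ ∃ qb, E u qb ∧ w u qb = J) := by
    by_cases hex : ∃ q, E u q ∧ w u q < i
    · obtain ⟨q0, hq0, hlt0⟩ := hex
      set P : ℕ → Prop := fun a => ∃ q, E u q ∧ w u q = a with hP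
      refine ⟨Nat.findGreatest P (i - 1), ?_, ?_, Or.inr ?_⟩
      · have := Nat.findGreatest_le (P := P) (i - 1); omega
      · intro q hq hlt
        exact Nat.le_findGreatest (by omega) (show P (w u q) from ⟨q, hq, rfl⟩)
      · exact Nat.findGreatest_spec (P := P) (m := w u q0) (by omega)
          (show P (w u q0) from ⟨q0, hq0, rfl⟩)
    · exact ⟨0, by omega, fun q hq hlt => absurd ⟨q, hq, hlt⟩ hex, Or.inl rfl⟩
  refine ⟨J + 1, i - J, by omega, by omega, by omega, ?_⟩
  have key : ∀ n, ¬ ReachN E w n u (J + 1) v (i - J) := by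
    intro n
    induction n using Nat.strong_induction_on with
    | _ n IH =>
    intro hn
    cases hn with
    | single e hj ht hsum => exact hv e
    | cons e hj ht hsum e' hle hsum' tail =>
        rename_i m q0 t0 u1 j1
        have hαi : i ≤ w u q0 := by
          by_contra hlt
          have h1 := hJub q0 e (by omega)
          omega
        by_cases h1u : u1 = u
        · subst h1u
          have hj1 : j1 = J + 1 := by omega
          exact IH m (by omega) (hj1 ▸ tail)
        · have hlow : ∀ u2, u2 ≠ u → E u2 q0 → w u2 q0 < w u q0 → t0 ≤ w u2 q0 → False := by
            intro u2 hne2 he2 hltw hle2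
            rcases hJcase with hJ0 | ⟨qb, hqb, hwqb⟩
            · omega
            · have hqbne : q0 ≠ qb := by
                intro h; rw [← h] at hwqb; omega
              have := p4Strict hC hP4 hne2 hqbne he2 e hqb (le_of_lt hltw) (by omega)
              omega
          by_cases hβ : w u q0 ≤ w u1 q0
          · rcases lemC hC hP4 m u1 j1 u q0 v (i - J) tail e e' (fun h => h1u h.symm) hβ
                (by omega) (by omega) with
              h | h | ⟨n', hn', D⟩ | ⟨n', hn', u2, hne2, he2, hlt2, hle2, D⟩
            · omega
            · exact hv (by rw [h.1]; exact e)
            · have hpos : j1 + w u q0 - w u1 q0 = J + 1 := by omega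
              exact IH n' (by omega) (hpos ▸ D)
            · exact hlow u2 hne2 he2 hlt2 (by omega)
          · exact hlow u1 (fun h => h1u h) e' (by omega) hle
  rintro ⟨n, hn⟩
  exact key n hn

/-- Slot equality: the equivalence relation on slots generated by the forced identifications. -/
def SlotEq (E : Vs → Vp → Prop) (w : Vs → Vp → ℕ) :
    ((Vs × ℕ) ⊕ (Vp × ℕ)) → ((Vs × ℕ) ⊕ (Vp × ℕ)) → Prop
  | .inl (u, j), .inl (u', j') =>
      (u = u' ∧ j = j') ∨ ∃ v t, Reach E w u j v t ∧ Reach E w u' j' v t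
  | .inl (u, j), .inr (v, t) => Reach E w u j v t
  | .inr (v, t), .inl (u, j) => Reach E w u j v t
  | .inr (v, t), .inr (v', t') =>
      (v = v' ∧ t = t') ∨ ∃ u j, Reach E w u j v t ∧ Reach E w u j v' t'

lemma slotEq_equivalence : Equivalence (SlotEq E w) := by
  constructor
  · rintro (⟨u, j⟩ | ⟨v, t⟩)
    · exact Or.inl ⟨rfl, rfl⟩
    · exact Or.inl ⟨rfl, rfl⟩
  · rintro (⟨u, j⟩ | ⟨v, t⟩) (⟨u', j'⟩ | ⟨v', t'⟩) h
    · rcases h with ⟨h1, h2⟩ | ⟨vv, tt, h1, h2⟩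
      · exact Or.inl ⟨h1.symm, h2.symm⟩
      · exact Or.inr ⟨vv, tt, h2, h1⟩
    · exact h
    · exact h
    · rcases h with ⟨h1, h2⟩ | ⟨uu, jj, h1, h2⟩
      · exact Or.inl ⟨h1.symm, h2.symm⟩
      · exact Or.inr ⟨uu, jj, h2, h1⟩
  · rintro (⟨u, j⟩ | ⟨v, t⟩) (⟨u', j'⟩ | ⟨v', t'⟩) (⟨u'', j''⟩ | ⟨v'', t''⟩) h1 h2
    -- inl inl inl
    · rcases h1 with ⟨rfl, rfl⟩ | ⟨V, T, ha, hb⟩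
      · exact h2
      · rcases h2 with ⟨rfl, rfl⟩ | ⟨V', T', hc, hd⟩
        · exact Or.inr ⟨V, T, ha, hb⟩
        · exact Or.inr ⟨V', T', reach_glue' hb ha hc, hd⟩
    -- inl inl inr
    · rcases h1 with ⟨rfl, rfl⟩ | ⟨V, T, ha, hb⟩
      · exact h2
      · exact reach_glue' hb ha h2
    -- inl inr inl
    · exact Or.inr ⟨v', t', h1, h2⟩
    -- inl inr inr
    · rcases h2 with ⟨rfl, rfl⟩ | ⟨U, Jj, ha, hb⟩
      · exact h1
      · exact reach_glue' ha h1 hb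
    -- inr inl inl
    · rcases h2 with ⟨rfl, rfl⟩ | ⟨V, T, ha, hb⟩
      · exact h1
      · exact reach_glue' ha hb h1
    -- inr inl inr
    · exact Or.inr ⟨u', j', h1, h2⟩
    -- inr inr inl
    · rcases h1 with ⟨rfl, rfl⟩ | ⟨U, Jj, ha, hb⟩
      · exact h2
      · exact reach_glue' hb h2 ha
    -- inr inr inr
    · rcases h1 with ⟨rfl, rfl⟩ | ⟨U, Jj, ha, hb⟩
      · exact h2
      · rcases h2 with ⟨rfl, rfl⟩ | ⟨U', Jj', hc, hd⟩
        · exact Or.inr ⟨U, Jj, ha, hb⟩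
        · exact Or.inr ⟨U, Jj, ha, reach_glue' hc hb hd⟩

/-- From a strict-P4 decomposition of size `k` of a C4-free bipartite graph, construct an
overlap labeling of length `k`. -/
lemma exists_labeling_s4 [Fintype Vs] [Fintype Vp] (hC : C4Free E) {k : ℕ}
    (hD : IsDecomposition E k w) (hP4 : SatisfiesStrictP4Rule E w) :
    ∃ (ls : Vs → List ℕ) (lp : Vp → List ℕ), IsOverlapLabeling E k ls lp := by
  classical
  set st : Setoid ((Vs × ℕ) ⊕ (Vp × ℕ)) := ⟨SlotEq E w, slotEq_equivalence⟩ with hst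
  obtain ⟨f, hf⟩ := exists_injective_nat (Quotient st)
  set χ : ((Vs × ℕ) ⊕ (Vp × ℕ)) → ℕ := fun s => f (Quotient.mk st s) with hχdef
  have hχ : ∀ s s', χ s = χ s' ↔ SlotEq E w s s' := by
    intro s s'
    constructor
    · intro h
      exact Quotient.eq.mp (hf h)
    · intro h
      simp only [hχdef]
      exact congrArg f (Quotient.sound h)
  refine ⟨fun u => (List.range k).map (fun m => χ (Sum.inl (u, k - m))),
          fun v => (List.range k).map (fun m => χ (Sum.inr (v, m + 1))), ?_, ?_, ?_⟩
  · intro u; simp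
  · intro v; simp
  · intro u v
    constructor
    · intro he
      have hwk := hD u v he
      refine ⟨w u v, hwk.1, ?_, ?_⟩
      · simp only [List.length_map, List.length_range, min_self]
        exact hwk.2
      · apply List.ext_getElem
        · simp only [List.length_drop, List.length_take, List.length_map, List.length_range]
          omega
        · intro m h1 h2
          have hm : m < w u v := by
            simp only [List.length_drop, List.length_map, List.length_range] at h1
            omega
          rw [List.getElem_drop, List.getElem_take, List.getElem_map, List.getElem_map,
            List.getElem_range, List.getElem_range]
          simp only [List.length_map, List.length_range]
          rw [hχ]
          have hidx : k - (k - w u v + m) = w u v - m := by omega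
          rw [hidx]
          show Reach E w u (w u v - m) v (m + 1)
          exact ⟨0, .single he (by omega) (by omega) (by omega)⟩
    · rintro ⟨i, hi1, hile, heq⟩
      simp only [List.length_map, List.length_range, min_self] at hile
      by_contra hv
      obtain ⟨j, t, hj, ht, hsum, hnR⟩ := master hC hP4 hv hi1
      apply hnR
      have hjle : j ≤ i := by omega
      have hlt : i - j <
          (((List.range k).map (fun m => χ (Sum.inl (u, k - m)))).drop
            ((((List.range k).map (fun m => χ (Sum.inl (u, k - m))))).length - i)).length := by
        simp only [List.length_drop, List.length_map, List.length_range]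
        omega
      have hge := List.getElem_of_eq heq hlt
      rw [List.getElem_drop, List.getElem_take, List.getElem_map, List.getElem_map,
        List.getElem_range, List.getElem_range] at hge
      simp only [List.length_map, List.length_range] at hge
      have e1 : k - (k - i + (i - j)) = j := by omega
      have e2 : i - j + 1 = t := by omega
      rw [e1, e2] at hge
      exact (hχ _ _).mp hge

lemma two_pow_add_lt {a c n : ℕ} (ha : a < n) (hc : c < n) (hac : a ≠ c) :
    2 ^ a + 2 ^ c < 2 ^ n := by
  wlog h : a < c generalizing a c
  · push_neg at h
    have := this hc ha (fun hh => hac hh.symm) (by omega)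
    omega
  · have h1 : (2 : ℕ) ^ a < 2 ^ c := Nat.pow_lt_pow_right (by norm_num) h
    have h2 : (2 : ℕ) ^ c * 2 ≤ 2 ^ n := by
      rw [← pow_succ]
      exact Nat.pow_le_pow_right (by norm_num) hc
    omega

/-- Every finite bipartite graph admits some strict-P4 decomposition (powers of two). -/
lemma exists_strict_decomp [Fintype Vs] [Fintype Vp] (E : Vs → Vp → Prop) :
    ∃ (k : ℕ) (w : Vs → Vp → ℕ), IsDecomposition E k w ∧ SatisfiesStrictP4Rule E w := by
  classical
  set N := Fintype.card (Vs × Vp) with hN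
  set e : (Vs × Vp) ≃ Fin N := Fintype.equivFin _ with he
  refine ⟨2 ^ N, fun u v => 2 ^ ((e (u, v) : ℕ)), ?_, ?_⟩
  · intro u v _
    exact ⟨Nat.one_le_two_pow, Nat.pow_le_pow_right (by norm_num) (le_of_lt (Fin.is_lt _))⟩
  · rintro s1 s2 p1 p2 ⟨hs, hp, e1, e2, e3, hne⟩ hmax
    dsimp only at hmax
    have hinj : ∀ x y : Vs × Vp, (e x : ℕ) = (e y : ℕ) → x = y := by
      intro x y h
      exact e.injective (Fin.ext h)
    have han : (e (s1, p1) : ℕ) ≠ (e (s2, p1) : ℕ) := by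
      intro h
      exact hs (congrArg Prod.fst (hinj _ _ h))
    have hcn : (e (s2, p2) : ℕ) ≠ (e (s2, p1) : ℕ) := by
      intro h
      exact hp (congrArg Prod.snd (hinj _ _ h)).symm
    have hac : (e (s1, p1) : ℕ) ≠ (e (s2, p2) : ℕ) := by
      intro h
      exact hs (congrArg Prod.fst (hinj _ _ h))
    have h1 : (2 : ℕ) ^ (e (s1, p1) : ℕ) ≤ 2 ^ (e (s2, p1) : ℕ) := by
      rw [hmax]; exact le_max_left _ _
    have h2 : (2 : ℕ) ^ (e (s2, p2) : ℕ) ≤ 2 ^ (e (s2, p1) : ℕ) := by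
      rw [hmax]; exact le_trans (le_max_right _ _) (le_max_right _ _)
    have h1' : (e (s1, p1) : ℕ) < (e (s2, p1) : ℕ) :=
      lt_of_le_of_ne ((Nat.pow_le_pow_iff_right (by norm_num)).mp h1) han
    have h2' : (e (s2, p2) : ℕ) < (e (s2, p1) : ℕ) :=
      lt_of_le_of_ne ((Nat.pow_le_pow_iff_right (by norm_num)).mp h2) hcn
    exact two_pow_add_lt h1' h2' hac

/-- Composition of overlaps around an induced P4. -/
lemma overlap_comp {x y z p : List ℕ} {r a b c : ℕ}
    (hx : x.length = r) (hy : y.length = r) (hz : z.length = r) (hp : p.length = r)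
    (ha : OverlapsBy x y a) (hb : OverlapsBy z y b) (hc : OverlapsBy z p c)
    (hab : a ≤ b) (hcb : c ≤ b) (hlt : b < a + c) : OverlapsBy x p (a + c - b) := by
  obtain ⟨ha1, ha2, ha3⟩ := ha
  obtain ⟨hb1, hb2, hb3⟩ := hb
  obtain ⟨hc1, hc2, hc3⟩ := hc
  rw [hx, hy, min_self] at ha2
  rw [hz, hy, min_self] at hb2
  rw [hz, hp, min_self] at hc2
  rw [hx] at ha3
  rw [hz] at hb3
  rw [hz] at hc3
  refine ⟨by omega, by rw [hx, hp, min_self]; omega, ?_⟩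
  rw [hx]
  calc x.drop (r - (a + c - b))
      = (x.drop (r - a)).drop (a - (a + c - b)) := by
        rw [List.drop_drop]; congr 1; omega
    _ = (y.take a).drop (b - c) := by
        rw [ha3]; congr 1; omega
    _ = ((y.take b).take a).drop (b - c) := by
        rw [List.take_take, Nat.min_eq_left hab]
    _ = ((z.drop (r - b)).take a).drop (b - c) := by rw [hb3]
    _ = ((z.drop (r - b)).drop (b - c)).take (a - (b - c)) := by rw [List.drop_take]
    _ = (z.drop (r - c)).take (a - (b - c)) := by
        rw [List.drop_drop, show r - b + (b - c) = r - c from by omega]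
    _ = (p.take c).take (a - (b - c)) := by rw [hc3]
    _ = p.take (a + c - b) := by
        rw [List.take_take]; congr 1; omega

end Statement4Aux

/-- For a `C₄`-free bipartite graph `G` with at least one edge, with
`t = min { k : some decomposition of size k satisfies the strict P4-rule }`, we have
`r(G) ≤ t` and `t ≤ 2·r(G) − 1` (hence `t/2 < r(G) ≤ t`). -/
theorem statement4 {Vs Vp : Type*} [Fintype Vs] [Fintype Vp] (E : Vs → Vp → Prop)
    (hC : C4Free E) (hE : ∃ u v, E u v) :
    bReadability E ≤
        sInf {k | ∃ w : Vs → Vp → ℕ, IsDecomposition E k w ∧ SatisfiesStrictP4Rule E w} ∧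
      sInf {k | ∃ w : Vs → Vp → ℕ, IsDecomposition E k w ∧ SatisfiesStrictP4Rule E w} ≤
        2 * bReadability E - 1 := by
  classical
  obtain ⟨K, wK, hKd, hKs⟩ := exists_strict_decomp E
  have hSne : {k | ∃ w : Vs → Vp → ℕ,
      IsDecomposition E k w ∧ SatisfiesStrictP4Rule E w}.Nonempty := ⟨K, wK, hKd, hKs⟩
  obtain ⟨wt, hwtD, hwtS⟩ := Nat.sInf_mem hSne
  obtain ⟨ls, lp, hlab⟩ := exists_labeling_s4 hC hwtD hwtS
  have h1 : bReadability E ≤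
      sInf {k | ∃ w : Vs → Vp → ℕ, IsDecomposition E k w ∧ SatisfiesStrictP4Rule E w} :=
    Nat.sInf_le ⟨ls, lp, hlab⟩
  refine ⟨h1, ?_⟩
  have hBne : {r | ∃ (ls : Vs → List ℕ) (lp : Vp → List ℕ),
      IsOverlapLabeling E r ls lp}.Nonempty := ⟨_, ls, lp, hlab⟩
  have hmem : ∃ (ls1 : Vs → List ℕ) (lp1 : Vp → List ℕ),
      IsOverlapLabeling E (bReadability E) ls1 lp1 := Nat.sInf_mem hBne
  obtain ⟨ls0, lp0, hls0, hlp0, hiff0⟩ := hmem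
  have hr1 : 1 ≤ bReadability E := by
    by_contra h0
    push_neg at h0
    obtain ⟨u0, v0, he0⟩ := hE
    obtain ⟨i, hi1, hile, -⟩ := (hiff0 u0 v0).1 he0
    rw [hls0 u0, hlp0 v0, min_self] at hile
    omega
  have hov : ∀ u v, E u v → OverlapsBy (ls0 u) (lp0 v) (ov (ls0 u) (lp0 v)) := by
    intro u v h
    exact Nat.sInf_mem ((hiff0 u v).1 h)
  have hovle : ∀ u v, E u v →
      1 ≤ ov (ls0 u) (lp0 v) ∧ ov (ls0 u) (lp0 v) ≤ bReadability E := by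
    intro u v h
    obtain ⟨h1', h2', -⟩ := hov u v h
    rw [hls0 u, hlp0 v, min_self] at h2'
    exact ⟨h1', h2'⟩
  refine Nat.sInf_le ⟨fun u v => 2 * ov (ls0 u) (lp0 v) - 1, ?_, ?_⟩
  · intro u v h
    have hb := hovle u v h
    refine ⟨?_, ?_⟩ <;> dsimp only <;> omega
  · rintro s1 s2 p1 p2 ⟨hs, hp, e1, e2, e3, hne⟩ hmax
    have ha := hov _ _ e1
    have hb := hov _ _ e2
    have hc := hov _ _ e3
    have ha' := hovle _ _ e1
    have hb' := hovle _ _ e2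
    have hc' := hovle _ _ e3
    dsimp only at hmax ⊢
    have habc : ov (ls0 s1) (lp0 p1) ≤ ov (ls0 s2) (lp0 p1) ∧
        ov (ls0 s2) (lp0 p2) ≤ ov (ls0 s2) (lp0 p1) := by omega
    have hge : ov (ls0 s1) (lp0 p1) + ov (ls0 s2) (lp0 p2) ≤ ov (ls0 s2) (lp0 p1) := by
      by_contra hlt2
      push_neg at hlt2
      have hcomp := overlap_comp (hls0 s1) (hlp0 p1) (hls0 s2) (hlp0 p2)
        ha hb hc habc.1 habc.2 hlt2
      exact hne ((hiff0 s1 p2).2 ⟨_, hcomp⟩)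
    omega

end Readability
end

section
/- Let ℓ be an overlap labeling of a bipartite graph G = (V_s, V_p, E). Then the ℓ-decomposition of G satisfies the P4-rule; that is, for every induced P4 in G with consecutive edges e1, e2, e3, if ov_ℓ(e2) = max{ov_ℓ(e1), ov_ℓ(e2), ov_ℓ(e3)}, then ov_ℓ(e2) ≥ ov_ℓ(e1) + ov_ℓ(e3). -/
namespace Readability

/-- If `ℓ = (ls, lp)` is an overlap labeling of a bipartite graph `G`, then the
`ℓ`-decomposition `e ↦ ov_ℓ(e)` satisfies the P4-rule. -/
theorem statement5 {Vs Vp : Type*} (E : Vs → Vp → Prop) (r : ℕ)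
    (ls : Vs → List ℕ) (lp : Vp → List ℕ) (h : IsOverlapLabeling E r ls lp) :
    SatisfiesP4Rule E (fun u v => ov (ls u) (lp v)) := by
  obtain ⟨hs, hp, hE⟩ := h
  rintro s1 s2 p1 p2 ⟨hss, hpp, e1, e2, e3, e4⟩ hmax
  simp only at hmax ⊢
  have hov : ∀ u v, E u v → OverlapsBy (ls u) (lp v) (ov (ls u) (lp v)) := by
    intro u v huv
    exact Nat.sInf_mem ((hE u v).mp huv)
  obtain ⟨ha1, ha2, ha3⟩ := hov _ _ e1
  obtain ⟨hb1, hb2, hb3⟩ := hov _ _ e2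
  obtain ⟨hc1, hc2, hc3⟩ := hov _ _ e3
  set a := ov (ls s1) (lp p1) with hA
  set b := ov (ls s2) (lp p1) with hB
  set c := ov (ls s2) (lp p2) with hC
  simp only [hs, hp] at ha2 ha3 hb2 hb3 hc2 hc3
  simp only [min_self] at ha2 hb2 hc2
  have hab : a ≤ b := le_of_le_of_eq (le_max_left _ _) hmax.symm
  have hcb : c ≤ b := le_of_le_of_eq ((le_max_right b c).trans (le_max_right _ _)) hmax.symm
  by_contra hlt
  push_neg at hlt
  set i := a + c - b with hi
  apply e4
  rw [hE]
  refine ⟨i, ?_, ?_, ?_⟩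
  · omega
  · rw [hs, hp]; omega
  · rw [hs]
    have key : (ls s1).drop (r - i) = ((lp p1).take a).drop (a - i) := by
      rw [← ha3, List.drop_drop]
      congr 1
      omega
    rw [key]
    have key2 : (lp p1).take a = ((ls s2).drop (r - b)).take a := by
      rw [hb3, List.take_take, min_eq_left hab]
    rw [key2, List.drop_take, List.drop_drop]
    rw [show r - b + (a - i) = r - c from by omega,
      show a - (a - i) = i from by omega, hc3, List.take_take]
    congr 1
    omega

end Readability
end
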